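/- arXiv:1110.1781 — 5 statements merged into one kernel-verified Lean document; each statement's English description precedes it below -/
import Mathlib

section
/- Under the crowdsourcing model with independent answers and initial weights of mean 1, the mean of the first-iteration user weight is E[y^{(1)}_{a→i}] = (2p_a - 1) · Σ_{j ∈ ∂⁻¹a\{i}} Σ_{b ∈ ∂j\{a}} (2p_b - 1). -/
open MeasureTheory ProbabilityTheory

lemma pm_integrable {Ω : Type*} [MeasureSpace Ω] [IsProbabilityMeasure (ℙ : Measure Ω)]
    (X : Ω → ℝ) (c : ℝ) (hc : c = 1 ∨ c = -1) (hm : Measurable X)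
    (hval : ∀ ω, X ω = c ∨ X ω = -c) : Integrable X ℙ := by
  refine ⟨hm.aestronglyMeasurable, HasFiniteIntegral.of_bounded (C := 1) (ae_of_all _ ?_)⟩
  intro ω
  rcases hval ω with h | h <;> rcases hc with h1 | h1 <;> simp [h, h1]

lemma pm_integral {Ω : Type*} [MeasureSpace Ω] [IsProbabilityMeasure (ℙ : Measure Ω)]
    (X : Ω → ℝ) (c q : ℝ) (hc : c = 1 ∨ c = -1) (hm : Measurable X)
    (hval : ∀ ω, X ω = c ∨ X ω = -c) (hq : q ∈ Set.Icc (0 : ℝ) 1)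
    (hP : ℙ {ω | X ω = c} = ENNReal.ofReal q) : ∫ ω, X ω = c * (2 * q - 1) := by
  have hcne : c ≠ -c := by rcases hc with h | h <;> simp [h] <;> norm_num
  have hs : MeasurableSet {ω | X ω = c} := hm (measurableSet_singleton c)
  have hint : Integrable X ℙ := pm_integrable X c hc hm hval
  have hsplit : ∫ ω, X ω = (∫ ω in {ω | X ω = c}, X ω) + ∫ ω in {ω | X ω = c}ᶜ, X ω :=
    (integral_add_compl hs hint).symm
  have h1 : (∫ ω in {ω | X ω = c}, X ω) = c * q := by
    rw [setIntegral_congr_fun hs (fun ω hω => hω)]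
    rw [setIntegral_const, measureReal_def, hP, ENNReal.toReal_ofReal hq.1, smul_eq_mul, mul_comm]
  have hcompl : ℙ {ω | X ω = c}ᶜ = 1 - ENNReal.ofReal q := by
    rw [prob_compl_eq_one_sub hs, hP]
  have h2 : (∫ ω in {ω | X ω = c}ᶜ, X ω) = -c * (1 - q) := by
    have : ∀ ω ∈ {ω | X ω = c}ᶜ, X ω = -c := by
      intro ω hω
      rcases hval ω with h | h
      · exact absurd h hω
      · exact h
    rw [setIntegral_congr_fun hs.compl this, setIntegral_const, measureReal_def, hcompl, smul_eq_mul, mul_comm]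
    congr 1
    rw [ENNReal.toReal_sub_of_le (by simpa using hq.2) (by simp)]
    simp [ENNReal.toReal_ofReal hq.1]
  rw [hsplit, h1, h2]; ring

/-- Mean of the first-iteration user weight in the crowdsourcing model:
`E[y¹_{a→i}] = (2p_a - 1) · Σ_{j ∈ ∂⁻¹a\{i}} Σ_{b ∈ ∂j\{a}} (2p_b - 1)`. -/
theorem first_iteration_weight_mean
    {Ω U Q : Type*} [MeasureSpace Ω] [IsProbabilityMeasure (ℙ : Measure Ω)]
    [DecidableEq U] [DecidableEq Q]
    (adj : Q → Finset U) (inv : U → Finset Q)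
    (hbip : ∀ (a : U) (j : Q), a ∈ adj j ↔ j ∈ inv a)
    (z : Q → ℝ) (hz : ∀ j, z j = 1 ∨ z j = -1)
    (p : U → ℝ) (hp : ∀ b, p b ∈ Set.Icc (0 : ℝ) 1)
    (A : Q → U → Ω → ℝ) (y0 : U → Q → Ω → ℝ)
    (hAmeas : ∀ j b, b ∈ adj j → Measurable (A j b))
    (hy0meas : ∀ b j, j ∈ inv b → Measurable (y0 b j))
    (hAval : ∀ j b, b ∈ adj j → ∀ ω, A j b ω = z j ∨ A j b ω = -z j)
    (hAdist : ∀ j b, b ∈ adj j → ℙ {ω | A j b ω = z j} = ENNReal.ofReal (p b))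
    (hy0int : ∀ b j, j ∈ inv b → Integrable (y0 b j) ℙ)
    (hy0mean : ∀ b j, j ∈ inv b → ∫ ω, y0 b j ω = 1)
    (hindep : iIndepFun
      (Sum.elim (fun e : {x : Q × U // x.2 ∈ adj x.1} => A e.1.1 e.1.2)
                (fun e : {x : U × Q // x.2 ∈ inv x.1} => y0 e.1.1 e.1.2)) ℙ)
    (a : U) (i : Q) :
    (∫ ω, ∑ j ∈ (inv a).erase i, ∑ b ∈ (adj j).erase a,
        A j a ω * A j b ω * y0 b j ω)
      = (2 * p a - 1) *
          ∑ j ∈ (inv a).erase i, ∑ b ∈ (adj j).erase a, (2 * p b - 1) := by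
  classical
  set f := Sum.elim (fun e : {x : Q × U // x.2 ∈ adj x.1} => A e.1.1 e.1.2)
      (fun e : {x : U × Q // x.2 ∈ inv x.1} => y0 e.1.1 e.1.2) with hf
  have hmeas_all : ∀ k, Measurable (f k) := by
    rintro (⟨⟨j, b⟩, h⟩ | ⟨⟨b, j⟩, h⟩)
    · exact hAmeas _ _ h
    · exact hy0meas _ _ h
  -- per-term facts
  have key : ∀ j ∈ (inv a).erase i, ∀ b ∈ (adj j).erase a,
      Integrable (fun ω => A j a ω * A j b ω * y0 b j ω) ℙ ∧
      (∫ ω, A j a ω * A j b ω * y0 b j ω) = (2 * p a - 1) * (2 * p b - 1) := by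
    intro j hj b hb
    have hja : a ∈ adj j := (hbip a j).2 (Finset.mem_of_mem_erase hj)
    have hjb : b ∈ adj j := Finset.mem_of_mem_erase hb
    have hba : b ≠ a := Finset.ne_of_mem_erase hb
    have hbj : j ∈ inv b := (hbip b j).1 hjb
    set ia : {x : Q × U // x.2 ∈ adj x.1} ⊕ {x : U × Q // x.2 ∈ inv x.1} :=
      Sum.inl ⟨(j, a), hja⟩
    set ib : {x : Q × U // x.2 ∈ adj x.1} ⊕ {x : U × Q // x.2 ∈ inv x.1} :=
      Sum.inl ⟨(j, b), hjb⟩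
    set iy : {x : Q × U // x.2 ∈ adj x.1} ⊕ {x : U × Q // x.2 ∈ inv x.1} :=
      Sum.inr ⟨(b, j), hbj⟩
    have hfa : f ia = A j a := rfl
    have hfb : f ib = A j b := rfl
    have hfy : f iy = y0 b j := rfl
    have hab : ia ≠ ib := by simp [ia, ib, hba.symm]
    have hay : ia ≠ iy := by simp [ia, iy]
    have hby : ib ≠ iy := by simp [ib, iy]
    have hintA : Integrable (A j a) ℙ := pm_integrable _ _ (hz j) (hAmeas _ _ hja) (hAval _ _ hja)
    have hintB : Integrable (A j b) ℙ := pm_integrable _ _ (hz j) (hAmeas _ _ hjb) (hAval _ _ hjb)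
    have hindepAB : IndepFun (A j a) (A j b) ℙ := by
      have := hindep.indepFun hab
      rwa [hfa, hfb] at this
    have hindepABy : IndepFun (A j a * A j b) (y0 b j) ℙ := by
      have := hindep.indepFun_mul_left hmeas_all ia ib iy hay hby
      rwa [hfa, hfb, hfy] at this
    have hintAB : Integrable (A j a * A j b) ℙ := hindepAB.integrable_mul hintA hintB
    have hintABy : Integrable (A j a * A j b * y0 b j) ℙ :=
      hindepABy.integrable_mul hintAB (hy0int _ _ hbj)
    have hintterm : Integrable (fun ω => A j a ω * A j b ω * y0 b j ω) ℙ := hintABy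
    refine ⟨hintterm, ?_⟩
    have hEa : ∫ ω, A j a ω = z j * (2 * p a - 1) :=
      pm_integral _ _ _ (hz j) (hAmeas _ _ hja) (hAval _ _ hja) (hp a) (hAdist _ _ hja)
    have hEb : ∫ ω, A j b ω = z j * (2 * p b - 1) :=
      pm_integral _ _ _ (hz j) (hAmeas _ _ hjb) (hAval _ _ hjb) (hp b) (hAdist _ _ hjb)
    have h1 : (∫ ω, A j a ω * A j b ω * y0 b j ω)
        = (∫ ω, (A j a * A j b) ω) * ∫ ω, y0 b j ω := by
      have := hindepABy.integral_mul_eq_mul_integral hintAB.1 (hy0int _ _ hbj).1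
      simpa [Pi.mul_apply] using this
    have h2 : (∫ ω, (A j a * A j b) ω) = (∫ ω, A j a ω) * ∫ ω, A j b ω := by
      have := hindepAB.integral_mul_eq_mul_integral hintA.1 hintB.1
      simpa [Pi.mul_apply] using this
    rw [h1, h2, hEa, hEb, hy0mean _ _ hbj]
    have hz2 : z j * z j = 1 := by rcases hz j with h | h <;> simp [h]
    linear_combination (2 * p a - 1) * (2 * p b - 1) * hz2
  have hint_inner : ∀ j ∈ (inv a).erase i,
      Integrable (fun ω => ∑ b ∈ (adj j).erase a, A j a ω * A j b ω * y0 b j ω) ℙ := by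
    intro j hj
    exact integrable_finset_sum _ (fun b hb => (key j hj b hb).1)
  rw [integral_finset_sum _ hint_inner]
  rw [Finset.mul_sum]
  refine Finset.sum_congr rfl fun j hj => ?_
  rw [integral_finset_sum _ (fun b hb => (key j hj b hb).1), Finset.mul_sum]
  exact Finset.sum_congr rfl fun b hb => (key j hj b hb).2
end

section
/- Under the crowdsourcing model with independent answers and i.i.d. initial weights of mean 1 and variance 1, the variance of the first-iteration user weight is Var(y^{(1)}_{a→i}) = Σ_{j ∈ ∂⁻¹a\{i}} [ Σ_{b ∈ ∂j\{a}} (2 - (2p_b - 1)²) + (1 - (2p_a - 1)²) · ( Σ_{b ∈ ∂j\{a}} (2p_b - 1) )² ]. -/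
open MeasureTheory ProbabilityTheory

/-- Variance of the first-iteration user weight in the crowdsourcing model:
`Var(y¹_{a→i}) = Σ_{j ∈ ∂⁻¹a\{i}} [ Σ_{b ∈ ∂j\{a}} (2 - (2p_b - 1)²)
  + (1 - (2p_a - 1)²)·(Σ_{b ∈ ∂j\{a}} (2p_b - 1))² ]`. -/
theorem first_iteration_weight_variance
    {Ω U Q : Type*} [MeasureSpace Ω] [IsProbabilityMeasure (ℙ : Measure Ω)]
    [DecidableEq U] [DecidableEq Q]
    (adj : Q → Finset U) (inv : U → Finset Q)
    (hbip : ∀ (a : U) (j : Q), a ∈ adj j ↔ j ∈ inv a)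
    (z : Q → ℝ) (hz : ∀ j, z j = 1 ∨ z j = -1)
    (p : U → ℝ) (hp : ∀ b, p b ∈ Set.Icc (0 : ℝ) 1)
    (A : Q → U → Ω → ℝ) (y0 : U → Q → Ω → ℝ)
    (hAmeas : ∀ j b, b ∈ adj j → Measurable (A j b))
    (hy0meas : ∀ b j, j ∈ inv b → Measurable (y0 b j))
    (hAval : ∀ j b, b ∈ adj j → ∀ ω, A j b ω = z j ∨ A j b ω = -z j)
    (hAdist : ∀ j b, b ∈ adj j → ℙ {ω | A j b ω = z j} = ENNReal.ofReal (p b))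
    (hy0sq : ∀ b j, j ∈ inv b → MemLp (y0 b j) 2 ℙ)
    (hy0mean : ∀ b j, j ∈ inv b → ∫ ω, y0 b j ω = 1)
    (hy0var : ∀ b j, j ∈ inv b → variance (y0 b j) ℙ = 1)
    (hindep : iIndepFun
      (Sum.elim (fun e : {x : Q × U // x.2 ∈ adj x.1} => A e.1.1 e.1.2)
                (fun e : {x : U × Q // x.2 ∈ inv x.1} => y0 e.1.1 e.1.2)) ℙ)
    (a : U) (i : Q) :
    variance (fun ω => ∑ j ∈ (inv a).erase i, ∑ b ∈ (adj j).erase a,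
        A j a ω * A j b ω * y0 b j ω) ℙ
      = ∑ j ∈ (inv a).erase i,
          ((∑ b ∈ (adj j).erase a, (2 - (2 * p b - 1) ^ 2))
            + (1 - (2 * p a - 1) ^ 2) *
                (∑ b ∈ (adj j).erase a, (2 * p b - 1)) ^ 2) := by
  classical
  set ι := {x : Q × U // x.2 ∈ adj x.1} ⊕ {x : U × Q // x.2 ∈ inv x.1} with hι
  set f : ι → Ω → ℝ :=
    Sum.elim (fun e : {x : Q × U // x.2 ∈ adj x.1} => A e.1.1 e.1.2)
             (fun e : {x : U × Q // x.2 ∈ inv x.1} => y0 e.1.1 e.1.2) with hf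
  have hfmeas : ∀ k : ι, Measurable (f k) := by
    rintro (⟨⟨j, b⟩, h⟩ | ⟨⟨b, j⟩, h⟩)
    · exact hAmeas j b h
    · exact hy0meas b j h
  -- basic pointwise facts about A
  have hz2 : ∀ j, z j ^ 2 = 1 := by
    intro j; rcases hz j with h | h <;> rw [h] <;> norm_num
  have hA2 : ∀ j b, b ∈ adj j → ∀ ω, A j b ω ^ 2 = 1 := by
    intro j b h ω
    rcases hAval j b h ω with h1 | h1 <;> rw [h1] <;> simpa using hz2 j
  have hAabs : ∀ j b, b ∈ adj j → ∀ ω, |A j b ω| = 1 := by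
    intro j b h ω
    have := hA2 j b h ω
    nlinarith [abs_nonneg (A j b ω), sq_abs (A j b ω)]
  have hAint : ∀ j b, b ∈ adj j → Integrable (A j b) ℙ := by
    intro j b h
    refine Integrable.mono' (integrable_const 1) (hAmeas j b h).aestronglyMeasurable ?_
    filter_upwards with ω
    rw [Real.norm_eq_abs, hAabs j b h ω]
  -- mean of A
  have hAmean : ∀ j b, b ∈ adj j → ∫ ω, A j b ω = z j * (2 * p b - 1) := by
    intro j b h
    set E := {ω | A j b ω = z j} with hE
    have hEm : MeasurableSet E := by
      have hre : E = A j b ⁻¹' {z j} := by ext ω; simp [hE]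
      rw [hre]; exact hAmeas j b h (measurableSet_singleton _)
    have hrepr : A j b = fun ω => (2 * z j) * E.indicator (fun _ => (1:ℝ)) ω - z j := by
      funext ω
      by_cases hω : ω ∈ E
      · rw [Set.indicator_of_mem hω]
        have h1 : A j b ω = z j := hω
        rw [h1]; ring
      · rw [Set.indicator_of_notMem hω]
        have h1 : A j b ω ≠ z j := hω
        rcases hAval j b h ω with h2 | h2
        · exact absurd h2 h1
        · rw [h2]; ring
    have hind : Integrable (E.indicator (fun _ => (1:ℝ))) ℙ :=
      (integrable_const 1).indicator hEm
    rw [hrepr, integral_sub (hind.const_mul _) (integrable_const _),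
      integral_const_mul, integral_indicator_const (1:ℝ) hEm, integral_const]
    have hμ : (ℙ E).toReal = p b := by
      rw [hE, hAdist j b h]; exact ENNReal.toReal_ofReal (hp b).1
    simp [measureReal_def, hμ]
    ring
  -- integrability / mean facts for y0
  have hy0int : ∀ b j, j ∈ inv b → Integrable (y0 b j) ℙ :=
    fun b j h => (hy0sq b j h).integrable one_le_two
  have hy0sqmean : ∀ b j, j ∈ inv b → ∫ ω, (y0 b j ω) ^ 2 = 2 := by
    intro b j h
    have h1 := hy0var b j h
    rw [variance_eq_sub (hy0sq b j h)] at h1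
    have h2 : (∫ ω, (y0 b j ^ 2) ω ∂ℙ) = ∫ ω, (y0 b j ω) ^ 2 := by
      simp [Pi.pow_apply]
    rw [h2, hy0mean b j h] at h1
    linarith
  -- integrability of A·y products
  have hAyindep : ∀ j b, b ∈ adj j → ∀ (hbj : j ∈ inv b),
      IndepFun (A j b) (y0 b j) ℙ := by
    intro j b h hbj
    exact hindep.indepFun (i := Sum.inl ⟨(j, b), h⟩) (j := Sum.inr ⟨(b, j), hbj⟩)
      (by simp)
  have hAyint : ∀ j b, b ∈ adj j → ∀ (hbj : j ∈ inv b),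
      Integrable (fun ω => A j b ω * y0 b j ω) ℙ := by
    intro j b h hbj
    exact (hAyindep j b h hbj).integrable_mul (hAint j b h) (hy0int b j hbj)
  have hAymean : ∀ j b, b ∈ adj j → ∀ (hbj : j ∈ inv b),
      ∫ ω, A j b ω * y0 b j ω = z j * (2 * p b - 1) := by
    intro j b h hbj
    have h1 := (hAyindep j b h hbj).integral_mul_eq_mul_integral
      (hAint j b h).aestronglyMeasurable (hy0int b j hbj).aestronglyMeasurable
    have h2 : (∫ ω, (A j b * y0 b j) ω ∂ℙ) = ∫ ω, A j b ω * y0 b j ω := rfl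
    rw [h2] at h1
    rw [h1, hAmean j b h, hy0mean b j hbj, mul_one]
  -- the per-question summands
  set X : Q → Ω → ℝ :=
    fun j ω => ∑ b ∈ (adj j).erase a, A j a ω * A j b ω * y0 b j ω with hX
  -- Memℒp of each summand
  have hXmem : ∀ j ∈ (inv a).erase i, MemLp (X j) 2 ℙ := by
    intro j hj
    have hja : j ∈ inv a := Finset.mem_of_mem_erase hj
    have haj : a ∈ adj j := (hbip a j).2 hja
    have hXm : Measurable (X j) := by
      apply Finset.measurable_sum
      intro b hb
      exact ((hAmeas j a haj).mul (hAmeas j b (Finset.mem_of_mem_erase hb))).mul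
        (hy0meas b j ((hbip b j).1 (Finset.mem_of_mem_erase hb)))
    have hg : MemLp (∑ b ∈ (adj j).erase a, fun ω => |y0 b j ω|) 2 ℙ := by
      apply memLp_finset_sum'
      intro b hb
      have := (hy0sq b j ((hbip b j).1 (Finset.mem_of_mem_erase hb))).norm
      simpa [Real.norm_eq_abs] using this
    refine MemLp.mono' hg hXm.aestronglyMeasurable ?_
    filter_upwards with ω
    rw [Real.norm_eq_abs, Finset.sum_apply]
    calc |X j ω| ≤ ∑ b ∈ (adj j).erase a, |A j a ω * A j b ω * y0 b j ω| :=
          Finset.abs_sum_le_sum_abs _ _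
      _ = ∑ b ∈ (adj j).erase a, |y0 b j ω| := by
          refine Finset.sum_congr rfl fun b hb => ?_
          rw [abs_mul, abs_mul, hAabs j a haj ω,
            hAabs j b (Finset.mem_of_mem_erase hb) ω]
          ring
  -- pairwise independence of the summands
  have hXindep : ∀ j ∈ (inv a).erase i, ∀ j' ∈ (inv a).erase i, j ≠ j' →
      IndepFun (X j) (X j') ℙ := by
    have key : ∀ k ∈ (inv a).erase i, ∃ (F : Finset ι) (φ : (↥F → ℝ) → ℝ),
        Measurable φ ∧ (∀ x ∈ F, Sum.elim
          (fun e : {x : Q × U // x.2 ∈ adj x.1} => e.1.1)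
          (fun e : {x : U × Q // x.2 ∈ inv x.1} => e.1.2) x = k) ∧
        X k = φ ∘ (fun ω (s : F) => f s ω) := by
      intro k hk
      have hka : k ∈ inv a := Finset.mem_of_mem_erase hk
      have hak : a ∈ adj k := (hbip a k).2 hka
      refine ⟨insert (Sum.inl ⟨(k, a), hak⟩)
        (((adj k).erase a).attach.image
            (fun x => (Sum.inl ⟨(k, x.1), Finset.mem_of_mem_erase x.2⟩ : ι)) ∪
         ((adj k).erase a).attach.image
            (fun x => (Sum.inr ⟨(x.1, k),
              (hbip x.1 k).1 (Finset.mem_of_mem_erase x.2)⟩ : ι))),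
        fun v => v ⟨Sum.inl ⟨(k, a), hak⟩, Finset.mem_insert_self _ _⟩ *
          ∑ x ∈ ((adj k).erase a).attach,
            v ⟨Sum.inl ⟨(k, x.1), Finset.mem_of_mem_erase x.2⟩,
               Finset.mem_insert_of_mem (Finset.mem_union_left _
                 (Finset.mem_image_of_mem _ (Finset.mem_attach _ x)))⟩ *
            v ⟨Sum.inr ⟨(x.1, k), (hbip x.1 k).1 (Finset.mem_of_mem_erase x.2)⟩,
               Finset.mem_insert_of_mem (Finset.mem_union_right _
                 (Finset.mem_image_of_mem _ (Finset.mem_attach _ x)))⟩,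
        ?_, ?_, ?_⟩
      · exact (measurable_pi_apply _).mul (Finset.measurable_sum _ fun x _ =>
          (measurable_pi_apply _).mul (measurable_pi_apply _))
      · intro x hx
        simp only [Finset.mem_insert, Finset.mem_union, Finset.mem_image,
          Finset.mem_attach, true_and] at hx
        rcases hx with rfl | ⟨⟨b, hb⟩, rfl⟩ | ⟨⟨b, hb⟩, rfl⟩ <;> rfl
      · funext ω
        show X k ω = _
        simp only [Function.comp, hf, Sum.elim_inl, Sum.elim_inr, hX]
        rw [Finset.mul_sum,
          ← Finset.sum_attach ((adj k).erase a)
            (fun b => A k a ω * A k b ω * y0 b k ω)]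
        exact Finset.sum_congr rfl fun x _ => by ring
    intro j hj j' hj' hne
    obtain ⟨F, φ, hφ, hFk, hXφ⟩ := key j hj
    obtain ⟨F', φ', hφ', hFk', hXφ'⟩ := key j' hj'
    have hdisj : Disjoint F F' := Finset.disjoint_left.2 fun x h1 h2 =>
      hne ((hFk x h1).symm.trans (hFk' x h2))
    rw [hXφ, hXφ']
    exact (hindep.indepFun_finset F F' hdisj hfmeas).comp hφ hφ'
  -- mean of each summand
  have hXmean : ∀ j ∈ (inv a).erase i,
      ∫ ω, X j ω = ∑ b ∈ (adj j).erase a,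
        (z j * (2 * p a - 1)) * (z j * (2 * p b - 1)) := by
    intro j hj
    have hja : j ∈ inv a := Finset.mem_of_mem_erase hj
    have haj : a ∈ adj j := (hbip a j).2 hja
    have hterm : ∀ b ∈ (adj j).erase a,
        (∫ ω, A j a ω * A j b ω * y0 b j ω)
          = (z j * (2 * p a - 1)) * (z j * (2 * p b - 1)) := by
      intro b hb
      have hbj : b ∈ adj j := Finset.mem_of_mem_erase hb
      have hjb : j ∈ inv b := (hbip b j).1 hbj
      have hba : b ≠ a := Finset.ne_of_mem_erase hb
      have hpair : IndepFun (fun ω => (A j a ω, A j b ω)) (y0 b j) ℙ :=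
        hindep.indepFun_prodMk hfmeas (Sum.inl ⟨(j, a), haj⟩)
          (Sum.inl ⟨(j, b), hbj⟩) (Sum.inr ⟨(b, j), hjb⟩) (by simp) (by simp)
      have hmul : IndepFun (fun ω => A j a ω * A j b ω) (y0 b j) ℙ :=
        hpair.comp (measurable_fst.mul measurable_snd) measurable_id
      have hAA : Integrable (fun ω => A j a ω * A j b ω) ℙ := by
        refine Integrable.mono' (integrable_const 1)
          (((hAmeas j a haj).mul (hAmeas j b hbj)).aestronglyMeasurable) ?_
        filter_upwards with ω
        rw [Real.norm_eq_abs, abs_mul, hAabs j a haj ω, hAabs j b hbj ω]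
        norm_num
      have h1 := hmul.integral_mul_eq_mul_integral hAA.aestronglyMeasurable (hy0int b j hjb).aestronglyMeasurable
      have hAAa : IndepFun (A j a) (A j b) ℙ :=
        hindep.indepFun (i := Sum.inl ⟨(j, a), haj⟩) (j := Sum.inl ⟨(j, b), hbj⟩)
          (by simp [Subtype.ext_iff, Prod.ext_iff, hba.symm])
      have h2 := hAAa.integral_mul_eq_mul_integral (hAint j a haj).aestronglyMeasurable (hAint j b hbj).aestronglyMeasurable
      have h2' : (∫ ω, A j a ω * A j b ω) = (∫ ω, A j a ω) * ∫ ω, A j b ω := h2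
      have h1' : (∫ ω, A j a ω * A j b ω * y0 b j ω)
          = (∫ ω, A j a ω * A j b ω) * ∫ ω, y0 b j ω := h1
      rw [h1', h2', hAmean j a haj, hAmean j b hbj, hy0mean b j hjb, mul_one]
    have hint : ∀ b ∈ (adj j).erase a,
        Integrable (fun ω => A j a ω * A j b ω * y0 b j ω) ℙ := by
      intro b hb
      have hbj : b ∈ adj j := Finset.mem_of_mem_erase hb
      have hjb : j ∈ inv b := (hbip b j).1 hbj
      refine Integrable.mono' ((hy0int b j hjb).abs)
        ((((hAmeas j a haj).mul (hAmeas j b hbj)).mul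
          (hy0meas b j hjb)).aestronglyMeasurable) ?_
      filter_upwards with ω
      rw [Real.norm_eq_abs, abs_mul, abs_mul, hAabs j a haj ω, hAabs j b hbj ω]
      simp
    have hsum : (∫ ω, X j ω)
        = ∑ b ∈ (adj j).erase a, ∫ ω, A j a ω * A j b ω * y0 b j ω := by
      exact integral_finset_sum _ hint
    rw [hsum]
    exact Finset.sum_congr rfl hterm
  -- second moment of each summand
  have hXsq : ∀ j ∈ (inv a).erase i,
      ∫ ω, (X j ω) ^ 2 = ∑ b ∈ (adj j).erase a,
        (2 + (z j * (2 * p b - 1)) *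
          ∑ b' ∈ ((adj j).erase a).erase b, z j * (2 * p b' - 1)) := by
    intro j hj
    have hja : j ∈ inv a := Finset.mem_of_mem_erase hj
    have haj : a ∈ adj j := (hbip a j).2 hja
    have hGdiag : ∀ b ∈ (adj j).erase a,
        (∫ ω, (A j a ω * A j b ω * y0 b j ω) * (A j a ω * A j b ω * y0 b j ω)) = 2 := by
      intro b hb
      have hbj : b ∈ adj j := Finset.mem_of_mem_erase hb
      have hjb : j ∈ inv b := (hbip b j).1 hbj
      have hpt : (fun ω => (A j a ω * A j b ω * y0 b j ω) * (A j a ω * A j b ω * y0 b j ω))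
          = fun ω => (y0 b j ω) ^ 2 := by
        funext ω
        have h1 := hA2 j a haj ω
        have h2 := hA2 j b hbj ω
        linear_combination (A j b ω ^ 2 * y0 b j ω ^ 2) * h1 + (y0 b j ω ^ 2) * h2
      rw [hpt]
      exact hy0sqmean b j hjb
    have hGval : ∀ b ∈ (adj j).erase a, ∀ b' ∈ (adj j).erase a, b ≠ b' →
        (∫ ω, (A j a ω * A j b ω * y0 b j ω) * (A j a ω * A j b' ω * y0 b' j ω))
          = (z j * (2 * p b - 1)) * (z j * (2 * p b' - 1)) := by
      intro b hb b' hb' hbb'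
      have hbj : b ∈ adj j := Finset.mem_of_mem_erase hb
      have hjb : j ∈ inv b := (hbip b j).1 hbj
      have hb'j : b' ∈ adj j := Finset.mem_of_mem_erase hb'
      have hjb' : j ∈ inv b' := (hbip b' j).1 hb'j
      have hpt : (fun ω => (A j a ω * A j b ω * y0 b j ω) * (A j a ω * A j b' ω * y0 b' j ω))
          = fun ω => (A j b ω * y0 b j ω) * (A j b' ω * y0 b' j ω) := by
        funext ω
        have h1 := hA2 j a haj ω
        linear_combination (A j b ω * y0 b j ω * A j b' ω * y0 b' j ω) * h1
      have hind4 : IndepFun (fun ω => (A j b ω, y0 b j ω))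
          (fun ω => (A j b' ω, y0 b' j ω)) ℙ :=
        hindep.indepFun_prodMk_prodMk hfmeas (Sum.inl ⟨(j, b), hbj⟩)
          (Sum.inr ⟨(b, j), hjb⟩) (Sum.inl ⟨(j, b'), hb'j⟩) (Sum.inr ⟨(b', j), hjb'⟩)
          (by simp [Subtype.ext_iff, Prod.ext_iff, hbb'])
          (by simp) (by simp)
          (by simp [Subtype.ext_iff, Prod.ext_iff, hbb'])
      have hmulmul : IndepFun (fun ω => A j b ω * y0 b j ω)
          (fun ω => A j b' ω * y0 b' j ω) ℙ :=
        hind4.comp (measurable_fst.mul measurable_snd)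
          (measurable_fst.mul measurable_snd)
      rw [hpt]
      have h1 := hmulmul.integral_mul_eq_mul_integral
        (hAyint j b hbj hjb).aestronglyMeasurable (hAyint j b' hb'j hjb').aestronglyMeasurable
      have h1' : (∫ ω, (A j b ω * y0 b j ω) * (A j b' ω * y0 b' j ω))
          = (∫ ω, A j b ω * y0 b j ω) * ∫ ω, A j b' ω * y0 b' j ω := h1
      rw [h1', hAymean j b hbj hjb, hAymean j b' hb'j hjb']
    have hGint : ∀ b ∈ (adj j).erase a, ∀ b' ∈ (adj j).erase a,
        Integrable (fun ω => (A j a ω * A j b ω * y0 b j ω) *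
          (A j a ω * A j b' ω * y0 b' j ω)) ℙ := by
      intro b hb b' hb'
      have hbj : b ∈ adj j := Finset.mem_of_mem_erase hb
      have hjb : j ∈ inv b := (hbip b j).1 hbj
      have hb'j : b' ∈ adj j := Finset.mem_of_mem_erase hb'
      have hjb' : j ∈ inv b' := (hbip b' j).1 hb'j
      by_cases hbb' : b = b'
      · subst hbb'
        have hpt : (fun ω => (y0 b j ω) ^ 2)
            = fun ω => (A j a ω * A j b ω * y0 b j ω) * (A j a ω * A j b ω * y0 b j ω) := by
          funext ω
          have h1 := hA2 j a haj ω
          have h2 := hA2 j b hbj ω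
          linear_combination (-(A j b ω ^ 2 * y0 b j ω ^ 2)) * h1 - (y0 b j ω ^ 2) * h2
        have := (hy0sq b j hjb).integrable_sq
        rw [hpt] at this
        exact this
      · have hpt : (fun ω => (A j b ω * y0 b j ω) * (A j b' ω * y0 b' j ω))
            = fun ω => (A j a ω * A j b ω * y0 b j ω) * (A j a ω * A j b' ω * y0 b' j ω) := by
          funext ω
          have h1 := hA2 j a haj ω
          linear_combination (-(A j b ω * y0 b j ω * A j b' ω * y0 b' j ω)) * h1
        have hind4 : IndepFun (fun ω => (A j b ω, y0 b j ω))
            (fun ω => (A j b' ω, y0 b' j ω)) ℙ :=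
          hindep.indepFun_prodMk_prodMk hfmeas (Sum.inl ⟨(j, b), hbj⟩)
            (Sum.inr ⟨(b, j), hjb⟩) (Sum.inl ⟨(j, b'), hb'j⟩) (Sum.inr ⟨(b', j), hjb'⟩)
            (by simp [Subtype.ext_iff, Prod.ext_iff, hbb'])
            (by simp) (by simp)
            (by simp [Subtype.ext_iff, Prod.ext_iff, hbb'])
        have hmulmul : IndepFun (fun ω => A j b ω * y0 b j ω)
            (fun ω => A j b' ω * y0 b' j ω) ℙ :=
          hind4.comp (measurable_fst.mul measurable_snd)
            (measurable_fst.mul measurable_snd)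
        have hthis := hmulmul.integrable_mul (hAyint j b hbj hjb) (hAyint j b' hb'j hjb')
        refine hthis.congr (Filter.Eventually.of_forall fun ω => ?_)
        show (A j b ω * y0 b j ω) * (A j b' ω * y0 b' j ω) = _
        have h1 := hA2 j a haj ω
        linear_combination (-(A j b ω * y0 b j ω * A j b' ω * y0 b' j ω)) * h1
    have hpt2 : (fun ω => (X j ω) ^ 2) = fun ω => ∑ b ∈ (adj j).erase a,
        ∑ b' ∈ (adj j).erase a, (A j a ω * A j b ω * y0 b j ω) *
          (A j a ω * A j b' ω * y0 b' j ω) := by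
      funext ω
      rw [hX]
      rw [sq, Finset.sum_mul_sum]
    rw [hpt2]
    rw [integral_finset_sum _ (fun b hb => integrable_finset_sum _ (fun b' hb' =>
      hGint b hb b' hb'))]
    refine Finset.sum_congr rfl fun b hb => ?_
    rw [integral_finset_sum _ (fun b' hb' => hGint b hb b' hb')]
    rw [← Finset.add_sum_erase _ _ hb, hGdiag b hb]
    congr 1
    rw [Finset.mul_sum]
    refine Finset.sum_congr rfl fun b' hb' => ?_
    rw [hGval b hb b' (Finset.mem_of_mem_erase hb')
      (Finset.ne_of_mem_erase hb').symm]
  -- variance of each summand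
  have hXvar : ∀ j ∈ (inv a).erase i,
      variance (X j) ℙ = (∑ b ∈ (adj j).erase a, (2 - (2 * p b - 1) ^ 2))
            + (1 - (2 * p a - 1) ^ 2) *
                (∑ b ∈ (adj j).erase a, (2 * p b - 1)) ^ 2 := by
    intro j hj
    have hv := variance_eq_sub (hXmem j hj)
    have h2 : (∫ ω, (X j ^ 2) ω ∂ℙ) = ∫ ω, (X j ω) ^ 2 := by simp [Pi.pow_apply]
    rw [h2, hXsq j hj, hXmean j hj] at hv
    have hzz := hz2 j
    set B := (adj j).erase a with hB
    set s := ∑ b ∈ B, (2 * p b - 1) with hs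
    have e1 : ∀ b ∈ B, ∑ b' ∈ B.erase b, z j * (2 * p b' - 1)
        = z j * s - z j * (2 * p b - 1) := by
      intro b hb
      rw [← Finset.mul_sum]
      have h4 : (2 * p b - 1) + ∑ b' ∈ B.erase b, (2 * p b' - 1)
          = ∑ b ∈ B, (2 * p b - 1) := Finset.add_sum_erase B (fun b => 2 * p b - 1) hb
      have h5 : ∑ b' ∈ B.erase b, (2 * p b' - 1) = s - (2 * p b - 1) := by
        rw [hs]; linarith [h4]
      rw [h5]; ring
    have E1 : ∑ b ∈ B, (2 + (z j * (2 * p b - 1)) *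
          ∑ b' ∈ B.erase b, z j * (2 * p b' - 1))
        = ∑ b ∈ B, (2 - (2 * p b - 1) ^ 2 + (2 * p b - 1) * s) :=
      Finset.sum_congr rfl fun b hb => by
        rw [e1 b hb]
        linear_combination ((2 * p b - 1) * s - (2 * p b - 1) ^ 2) * hzz
    have E2 : ∑ b ∈ B, (z j * (2 * p a - 1)) * (z j * (2 * p b - 1))
        = z j ^ 2 * ((2 * p a - 1) * s) := by
      rw [hs]
      simp only [Finset.mul_sum]
      exact Finset.sum_congr rfl fun b _ => by ring
    have E4 : ∑ b ∈ B, (2 - (2 * p b - 1) ^ 2 + (2 * p b - 1) * s)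
        = (∑ b ∈ B, (2 - (2 * p b - 1) ^ 2)) + s * s := by
      rw [Finset.sum_add_distrib, ← Finset.sum_mul, ← hs]
    rw [E1, E2, hzz, E4] at hv
    rw [hv]
    ring
  -- put everything together
  have hsum : (fun ω => ∑ j ∈ (inv a).erase i, ∑ b ∈ (adj j).erase a,
      A j a ω * A j b ω * y0 b j ω) = ∑ j ∈ (inv a).erase i, X j := by
    funext ω
    simp [hX]
  rw [hsum, IndepFun.variance_sum hXmem
    (fun j hj j' hj' hne => hXindep j hj j' hj' hne)]
  exact Finset.sum_congr rfl fun j hj => hXvar j hj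
end

section
/- In the degree-regular crowdsourcing model, if for every user a and every question j ∈ ∂⁻¹a the neighbor reliabilities satisfy (1/(r-1)) Σ_{b ∈ ∂j\{a}} (2p_b - 1) = m and (1/(r-1)) Σ_{b ∈ ∂j\{a}} (2p_b - 1)² = φ, then the variance of the first-iteration weight is Var(y^{(1)}_{a→i}) = (s-1)(r-1)·[ (2 - φ) + (1 - (2p_a - 1)²)·(r-1)·m² ] for every user a and question i ∈ ∂⁻¹a. -/
open MeasureTheory ProbabilityTheory

lemma pm_mean {Ω : Type*} [MeasureSpace Ω] [IsProbabilityMeasure (ℙ : Measure Ω)]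
    (X : Ω → ℝ) (z p : ℝ) (hm : Measurable X)
    (hval : ∀ ω, X ω = z ∨ X ω = -z)
    (hd : ℙ {ω | X ω = z} = ENNReal.ofReal p) (hp : 0 ≤ p) :
    ∫ ω, X ω = z * (2 * p - 1) := by
  have hXeq : X = fun ω => (X ⁻¹' {z}).indicator (fun _ => 2 * z) ω + (-z) := by
    funext ω
    by_cases h : X ω = z
    · simp [Set.indicator_of_mem, h, Set.mem_preimage]; ring
    · rcases hval ω with h' | h'
      · exact absurd h' h
      · rw [Set.indicator_of_notMem (by simpa using h)]
        rw [h']; ring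
  have hmeasS : MeasurableSet (X ⁻¹' {z}) := hm (measurableSet_singleton z)
  rw [hXeq, integral_add ((integrable_const (2*z)).indicator hmeasS) (integrable_const (-z)),
    integral_indicator_const _ hmeasS, integral_const]
  have : X ⁻¹' {z} = {ω | X ω = z} := by ext ω; simp [Set.mem_preimage]
  rw [this, measureReal_def, hd, ENNReal.toReal_ofReal hp]
  simp
  ring

/-- In the degree-regular crowdsourcing model, if for every user `a` and question
`j ∈ ∂⁻¹a` the neighbor reliabilities satisfy
`(1/(r-1)) Σ_{b ∈ ∂j\{a}} (2p_b - 1) = m` and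
`(1/(r-1)) Σ_{b ∈ ∂j\{a}} (2p_b - 1)² = φ`, then
`Var(y¹_{a→i}) = (s-1)(r-1)·[(2 - φ) + (1 - (2p_a - 1)²)·(r-1)·m²]`
for every edge `(a,i)`. -/
theorem first_iteration_weight_variance_regular
    {Ω U Q : Type*} [MeasureSpace Ω] [IsProbabilityMeasure (ℙ : Measure Ω)]
    [DecidableEq U] [DecidableEq Q]
    (adj : Q → Finset U) (inv : U → Finset Q)
    (hbip : ∀ (a : U) (j : Q), a ∈ adj j ↔ j ∈ inv a)
    (r s : ℕ) (hr : 2 ≤ r) (hs : 2 ≤ s)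
    (hadj : ∀ j : Q, (adj j).card = r) (hinv : ∀ a : U, (inv a).card = s)
    (z : Q → ℝ) (hz : ∀ j, z j = 1 ∨ z j = -1)
    (p : U → ℝ) (hp : ∀ b, p b ∈ Set.Icc (0 : ℝ) 1)
    (m φ : ℝ)
    (hm : ∀ (a : U) (j : Q), j ∈ inv a →
      (1 / ((r : ℝ) - 1)) * ∑ b ∈ (adj j).erase a, (2 * p b - 1) = m)
    (hφ : ∀ (a : U) (j : Q), j ∈ inv a →
      (1 / ((r : ℝ) - 1)) * ∑ b ∈ (adj j).erase a, (2 * p b - 1) ^ 2 = φ)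
    (A : Q → U → Ω → ℝ) (y0 : U → Q → Ω → ℝ)
    (hAmeas : ∀ j b, b ∈ adj j → Measurable (A j b))
    (hy0meas : ∀ b j, j ∈ inv b → Measurable (y0 b j))
    (hAval : ∀ j b, b ∈ adj j → ∀ ω, A j b ω = z j ∨ A j b ω = -z j)
    (hAdist : ∀ j b, b ∈ adj j → ℙ {ω | A j b ω = z j} = ENNReal.ofReal (p b))
    (hy0sq : ∀ b j, j ∈ inv b → MemLp (y0 b j) 2 ℙ)
    (hy0mean : ∀ b j, j ∈ inv b → ∫ ω, y0 b j ω = 1)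
    (hy0var : ∀ b j, j ∈ inv b → variance (y0 b j) ℙ = 1)
    (hindep : iIndepFun (m := fun _ => (inferInstance : MeasurableSpace ℝ))
      (Sum.elim (fun e : {x : Q × U // x.2 ∈ adj x.1} => A e.1.1 e.1.2)
                (fun e : {x : U × Q // x.2 ∈ inv x.1} => y0 e.1.1 e.1.2)) ℙ)
    (a : U) (i : Q) (hi : i ∈ inv a) :
    variance (fun ω => ∑ j ∈ (inv a).erase i, ∑ b ∈ (adj j).erase a,
        A j a ω * A j b ω * y0 b j ω) ℙ
      = ((s : ℝ) - 1) * ((r : ℝ) - 1) *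
          ((2 - φ) + (1 - (2 * p a - 1) ^ 2) * ((r : ℝ) - 1) * m ^ 2) := by
  classical
  set f := (Sum.elim (fun e : {x : Q × U // x.2 ∈ adj x.1} => A e.1.1 e.1.2)
                (fun e : {x : U × Q // x.2 ∈ inv x.1} => y0 e.1.1 e.1.2)) with hf
  have hfmeas : ∀ k, Measurable (f k) := by
    rintro (⟨⟨j, b⟩, h⟩ | ⟨⟨b, j⟩, h⟩)
    · exact hAmeas j b h
    · exact hy0meas b j h
  set J := (inv a).erase i with hJ
  have hrR : (1:ℝ) ≤ (r:ℝ) - 1 := by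
    have : (2:ℝ) ≤ (r:ℝ) := by exact_mod_cast hr
    linarith
  have hrne : ((r:ℝ) - 1) ≠ 0 := by linarith
  -- pointwise facts about A
  have hzsq : ∀ j, z j * z j = 1 := by
    intro j; rcases hz j with h | h <;> rw [h] <;> norm_num
  have hAsq : ∀ j b, b ∈ adj j → ∀ ω, A j b ω * A j b ω = 1 := by
    intro j b hb ω
    rcases hAval j b hb ω with h | h <;> rw [h]
    · exact hzsq j
    · rw [neg_mul_neg]; exact hzsq j
  have hAbd : ∀ j b, b ∈ adj j → ∀ ω, ‖A j b ω‖ ≤ 1 := by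
    intro j b hb ω
    have h1 : ‖z j‖ = 1 := by rcases hz j with h | h <;> rw [h] <;> norm_num
    rcases hAval j b hb ω with h | h <;> rw [h] <;> simp [h1]
  have hEA : ∀ j b, b ∈ adj j → ∫ ω, A j b ω = z j * (2 * p b - 1) := by
    intro j b hb
    exact pm_mean (A j b) (z j) (p b) (hAmeas j b hb) (hAval j b hb) (hAdist j b hb) (hp b).1
  -- second moment of y0
  have hEy0sq : ∀ b j, j ∈ inv b → ∫ ω, y0 b j ω * y0 b j ω = 2 := by
    intro b j hj
    have h1 := variance_eq_sub (hy0sq b j hj)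
    rw [hy0var b j hj, hy0mean b j hj] at h1
    have h2 : ∫ ω, y0 b j ω * y0 b j ω = ∫ ω, (y0 b j ^ 2) ω := by
      congr 1; funext ω; simp [sq]
    rw [h2]
    linarith [h1]
  -- MemLp facts
  have hWL2 : ∀ j b, b ∈ adj j → ∀ (hj : j ∈ inv b),
      MemLp (fun ω => A j b ω * y0 b j ω) 2 ℙ := by
    intro j b hb hj
    refine MemLp.of_le (hy0sq b j hj) ?_ ?_
    · exact ((hAmeas j b hb).mul (hy0meas b j hj)).aestronglyMeasurable
    · refine Filter.Eventually.of_forall fun ω => ?_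
      rw [norm_mul]
      calc ‖A j b ω‖ * ‖y0 b j ω‖ ≤ 1 * ‖y0 b j ω‖ := by
            exact mul_le_mul_of_nonneg_right (hAbd j b hb ω) (norm_nonneg _)
        _ = ‖y0 b j ω‖ := one_mul _
  -- membership helpers
  have haj : ∀ j ∈ J, a ∈ adj j := fun j hj => (hbip a j).2 (Finset.mem_of_mem_erase hj)
  have hbinv : ∀ j b, b ∈ adj j → j ∈ inv b := fun j b hb => (hbip b j).1 hb
    -- the random variables per question
  set X : Q → Ω → ℝ := fun j ω => ∑ b ∈ (adj j).erase a, A j a ω * A j b ω * y0 b j ω with hX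
  have hgoal : (fun ω => ∑ j ∈ J, ∑ b ∈ (adj j).erase a,
      A j a ω * A j b ω * y0 b j ω) = ∑ j ∈ J, X j := by
    funext ω; rw [Finset.sum_apply]
  -- MemLp of individual terms
  have hTermL2 : ∀ j ∈ J, ∀ b ∈ (adj j).erase a,
      MemLp (fun ω => A j a ω * A j b ω * y0 b j ω) 2 ℙ := by
    intro j hj b hb
    have hbadj := Finset.mem_of_mem_erase hb
    refine MemLp.of_le (hy0sq b j (hbinv j b hbadj)) ?_ ?_
    · exact (((hAmeas j a (haj j hj)).mul (hAmeas j b hbadj)).mul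
        (hy0meas b j (hbinv j b hbadj))).aestronglyMeasurable
    · refine Filter.Eventually.of_forall fun ω => ?_
      rw [norm_mul, norm_mul]
      have h3 : ‖A j a ω‖ * ‖A j b ω‖ ≤ 1 := by
        nlinarith [hAbd j a (haj j hj) ω, hAbd j b hbadj ω, norm_nonneg (A j a ω),
          norm_nonneg (A j b ω)]
      nlinarith [h3, norm_nonneg (y0 b j ω)]
  have hXL2 : ∀ j ∈ J, MemLp (X j) 2 ℙ := by
    intro j hj
    have hXj : X j = ∑ b ∈ (adj j).erase a, (fun ω => A j a ω * A j b ω * y0 b j ω) := by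
      funext ω; rw [Finset.sum_apply]
    rw [hXj]
    exact memLp_finset_sum' _ fun b hb => hTermL2 j hj b hb
  -- blocks of indices for the grouping argument
  set Sfin : Q → Finset ({x : Q × U // x.2 ∈ adj x.1} ⊕ {x : U × Q // x.2 ∈ inv x.1}) :=
    fun j => ((adj j).attach.image fun b => Sum.inl ⟨(j, b.1), b.2⟩) ∪
      (((adj j).erase a).attach.image fun b =>
        Sum.inr ⟨(b.1, j), (hbip b.1 j).1 (Finset.mem_of_mem_erase b.2)⟩) with hSfin
  have hdisj : ∀ ⦃j j' : Q⦄, j ≠ j' → Disjoint (Sfin j) (Sfin j') := by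
    intro j j' hne
    rw [Finset.disjoint_left]
    rintro x hx hx'
    simp only [hSfin, Finset.mem_union, Finset.mem_image, Finset.mem_attach,
      true_and] at hx hx'
    obtain ⟨b, hb⟩ | ⟨b, hb⟩ := hx <;> obtain ⟨c, hc⟩ | ⟨c, hc⟩ := hx' <;>
        have h := hb.trans hc.symm
    · simp only [Sum.inl.injEq, Subtype.mk.injEq, Prod.mk.injEq] at h
      exact hne h.1
    · simp at h
    · simp at h
    · simp only [Sum.inr.injEq, Subtype.mk.injEq, Prod.mk.injEq] at h
      exact hne h.2
  have key : ∀ j ∈ J, ∃ g : ((k : (Sfin j : Finset _)) → ℝ) → ℝ,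
      Measurable g ∧ X j = fun ω => g fun k => f k.1 ω := by
    intro j hj
    have haJ : a ∈ adj j := haj j hj
    have hmem1 : (Sum.inl ⟨(j, a), haJ⟩ :
        {x : Q × U // x.2 ∈ adj x.1} ⊕ {x : U × Q // x.2 ∈ inv x.1}) ∈ Sfin j := by
      simp only [hSfin]
      exact Finset.mem_union_left _
        (Finset.mem_image.mpr ⟨⟨a, haJ⟩, Finset.mem_attach _ _, rfl⟩)
    have hmem2 : ∀ b : {x // x ∈ (adj j).erase a},
        (Sum.inl ⟨(j, b.1), Finset.mem_of_mem_erase b.2⟩ :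
          {x : Q × U // x.2 ∈ adj x.1} ⊕ {x : U × Q // x.2 ∈ inv x.1}) ∈ Sfin j := by
      intro b
      simp only [hSfin]
      exact Finset.mem_union_left _
        (Finset.mem_image.mpr ⟨⟨b.1, Finset.mem_of_mem_erase b.2⟩, Finset.mem_attach _ _, rfl⟩)
    have hmem3 : ∀ b : {x // x ∈ (adj j).erase a},
        (Sum.inr ⟨(b.1, j), (hbip b.1 j).1 (Finset.mem_of_mem_erase b.2)⟩ :
          {x : Q × U // x.2 ∈ adj x.1} ⊕ {x : U × Q // x.2 ∈ inv x.1}) ∈ Sfin j := by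
      intro b
      simp only [hSfin]
      exact Finset.mem_union_right _ (Finset.mem_image.mpr ⟨b, Finset.mem_attach _ _, rfl⟩)
    refine ⟨fun v => ∑ b ∈ ((adj j).erase a).attach,
      v ⟨_, hmem1⟩ * v ⟨_, hmem2 b⟩ * v ⟨_, hmem3 b⟩, ?_, ?_⟩
    · apply Finset.measurable_sum
      intro b _
      have m1 := measurable_pi_apply (X := fun _ : {k // k ∈ Sfin j} => ℝ)
        (⟨Sum.inl ⟨(j, a), haJ⟩, hmem1⟩ : {k // k ∈ Sfin j})
      have m2 := measurable_pi_apply (X := fun _ : {k // k ∈ Sfin j} => ℝ)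
        (⟨Sum.inl ⟨(j, b.1), Finset.mem_of_mem_erase b.2⟩, hmem2 b⟩ : {k // k ∈ Sfin j})
      have m3 := measurable_pi_apply (X := fun _ : {k // k ∈ Sfin j} => ℝ)
        (⟨Sum.inr ⟨(b.1, j), (hbip b.1 j).1 (Finset.mem_of_mem_erase b.2)⟩, hmem3 b⟩ :
          {k // k ∈ Sfin j})
      exact (m1.mul m2).mul m3
    · funext ω
      show (∑ b ∈ (adj j).erase a, A j a ω * A j b ω * y0 b j ω) = _
      rw [← Finset.sum_attach ((adj j).erase a) (fun b => A j a ω * A j b ω * y0 b j ω)]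
      rfl
  have hXind : (↑J : Set Q).Pairwise fun j j' => IndepFun (X j) (X j') ℙ := by
    intro j hj j' hj' hne
    obtain ⟨g, hgm, hgx⟩ := key j hj
    obtain ⟨g', hgm', hgx'⟩ := key j' hj'
    rw [hgx, hgx']
    exact (hindep.indepFun_finset (Sfin j) (Sfin j') (hdisj hne) hfmeas).comp hgm hgm'
    -- per-question expectations
  have hvarX : ∀ j ∈ J, variance (X j) ℙ =
      ((r : ℝ) - 1) * ((2 - φ) + (1 - (2 * p a - 1) ^ 2) * ((r : ℝ) - 1) * m ^ 2) := by
    intro j hj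
    have haJ : a ∈ adj j := haj j hj
    have hjinv : j ∈ inv a := Finset.mem_of_mem_erase hj
    have hBcard : ((((adj j).erase a).card : ℕ) : ℝ) = (r : ℝ) - 1 := by
      rw [Finset.card_erase_of_mem haJ, hadj j]
      have h1 : 1 ≤ r := by omega
      push_cast [Nat.cast_sub h1]
      ring
    have hsm : ∑ b ∈ (adj j).erase a, (2 * p b - 1) = ((r : ℝ) - 1) * m := by
      have h := hm a j hjinv
      rw [one_div_mul_eq_div, div_eq_iff hrne] at h
      linear_combination h
    have hsφ : ∑ b ∈ (adj j).erase a, (2 * p b - 1) ^ 2 = ((r : ℝ) - 1) * φ := by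
      have h := hφ a j hjinv
      rw [one_div_mul_eq_div, div_eq_iff hrne] at h
      linear_combination h
    -- mean of single products A_jb * y0_bj
    have hEW : ∀ b ∈ (adj j).erase a, ∫ ω, A j b ω * y0 b j ω = z j * (2 * p b - 1) := by
      intro b hb
      have hbadj := Finset.mem_of_mem_erase hb
      have i3 : IndepFun (f (Sum.inl ⟨(j, b), hbadj⟩)) (f (Sum.inr ⟨(b, j), hbinv j b hbadj⟩)) ℙ :=
        hindep.indepFun (by simp)
      have e : ∫ ω, A j b ω * y0 b j ω = (∫ ω, A j b ω) * ∫ ω, y0 b j ω :=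
        i3.integral_mul_eq_mul_integral (hAmeas j b hbadj).aestronglyMeasurable
          (hy0meas b j (hbinv j b hbadj)).aestronglyMeasurable
      rw [e, hEA j b hbadj, hy0mean b j (hbinv j b hbadj), mul_one]
    -- mean of the triple products
    have hETerm : ∀ b ∈ (adj j).erase a,
        ∫ ω, A j a ω * A j b ω * y0 b j ω = (2 * p a - 1) * (2 * p b - 1) := by
      intro b hb
      have hbadj := Finset.mem_of_mem_erase hb
      have hbne : b ≠ a := Finset.ne_of_mem_erase hb
      have i1 : IndepFun (fun ω => A j a ω * A j b ω) (y0 b j) ℙ := by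
        have h0 := hindep.indepFun_prodMk hfmeas
          (Sum.inl ⟨(j, a), haJ⟩) (Sum.inl ⟨(j, b), hbadj⟩)
          (Sum.inr ⟨(b, j), hbinv j b hbadj⟩) (by simp) (by simp)
        exact h0.comp (measurable_fst.mul measurable_snd) measurable_id
      have e1 : ∫ ω, A j a ω * A j b ω * y0 b j ω
          = (∫ ω, A j a ω * A j b ω) * ∫ ω, y0 b j ω :=
        i1.integral_mul_eq_mul_integral ((hAmeas j a haJ).mul (hAmeas j b hbadj)).aestronglyMeasurable
          (hy0meas b j (hbinv j b hbadj)).aestronglyMeasurable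
      have hne2 : (Sum.inl ⟨(j, a), haJ⟩ :
          {x : Q × U // x.2 ∈ adj x.1} ⊕ {x : U × Q // x.2 ∈ inv x.1})
          ≠ Sum.inl ⟨(j, b), hbadj⟩ := by
        simp only [ne_eq, Sum.inl.injEq, Subtype.mk.injEq, Prod.mk.injEq]
        rintro ⟨-, h⟩
        exact hbne h.symm
      have i2 : IndepFun (f (Sum.inl ⟨(j, a), haJ⟩)) (f (Sum.inl ⟨(j, b), hbadj⟩)) ℙ :=
        hindep.indepFun hne2
      have e2 : ∫ ω, A j a ω * A j b ω = (∫ ω, A j a ω) * ∫ ω, A j b ω :=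
        i2.integral_mul_eq_mul_integral (hAmeas j a haJ).aestronglyMeasurable
          (hAmeas j b hbadj).aestronglyMeasurable
      rw [e1, e2, hEA j a haJ, hEA j b hbadj, hy0mean b j (hbinv j b hbadj), mul_one]
      linear_combination (2 * p a - 1) * (2 * p b - 1) * hzsq j
    -- the mean of X j
    have hEX : ∫ ω, X j ω = (2 * p a - 1) * (((r : ℝ) - 1) * m) := by
      have h0 : ∫ ω, X j ω = ∑ b ∈ (adj j).erase a, ∫ ω, A j a ω * A j b ω * y0 b j ω :=
        integral_finset_sum _ fun b hb => (hTermL2 j hj b hb).integrable one_le_two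
      rw [h0, Finset.sum_congr rfl hETerm, ← Finset.mul_sum, hsm]
    -- integrability of pairwise products of W's
    have hone : (1 : ENNReal) / 1 = 1 / 2 + 1 / 2 := by
      rw [ENNReal.div_add_div_same, div_one]
      rw [show (1 : ENNReal) + 1 = 2 from by norm_num,
        ENNReal.div_self (by norm_num) (by norm_num)]
    have hint : ∀ b ∈ (adj j).erase a, ∀ c ∈ (adj j).erase a,
        Integrable (fun ω => (A j b ω * y0 b j ω) * (A j c ω * y0 c j ω)) ℙ := by
      intro b hb c hc
      have h1 := hWL2 j b (Finset.mem_of_mem_erase hb) (hbinv j b (Finset.mem_of_mem_erase hb))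
      have h2 := hWL2 j c (Finset.mem_of_mem_erase hc) (hbinv j c (Finset.mem_of_mem_erase hc))
      have h3 := h2.smul h1 (r := 1)
        (hpqr := ⟨by rw [inv_one, ENNReal.inv_two_add_inv_two]⟩)
      rw [memLp_one_iff_integrable] at h3
      exact h3.congr (Filter.Eventually.of_forall fun ω => by simp [smul_eq_mul])
    -- diagonal second moments
    have hdiag : ∀ b ∈ (adj j).erase a,
        ∫ ω, (A j b ω * y0 b j ω) * (A j b ω * y0 b j ω) = 2 := by
      intro b hb
      have hbadj := Finset.mem_of_mem_erase hb
      have hpt : (fun ω => (A j b ω * y0 b j ω) * (A j b ω * y0 b j ω))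
          = fun ω => y0 b j ω * y0 b j ω := by
        funext ω
        have h := hAsq j b hbadj ω
        calc (A j b ω * y0 b j ω) * (A j b ω * y0 b j ω)
            = (A j b ω * A j b ω) * (y0 b j ω * y0 b j ω) := by ring
          _ = y0 b j ω * y0 b j ω := by rw [h, one_mul]
      rw [show (∫ ω, (A j b ω * y0 b j ω) * (A j b ω * y0 b j ω))
          = ∫ ω, y0 b j ω * y0 b j ω from congrArg _ hpt]
      exact hEy0sq b j (hbinv j b hbadj)
    -- cross second moments
    have hcross : ∀ b ∈ (adj j).erase a, ∀ c ∈ (adj j).erase a, b ≠ c →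
        ∫ ω, (A j b ω * y0 b j ω) * (A j c ω * y0 c j ω)
          = (2 * p b - 1) * (2 * p c - 1) := by
      intro b hb c hc hbc
      have hbadj := Finset.mem_of_mem_erase hb
      have hcadj := Finset.mem_of_mem_erase hc
      have i4 : IndepFun (fun ω => A j b ω * y0 b j ω) (fun ω => A j c ω * y0 c j ω) ℙ := by
        have h0 := hindep.indepFun_prodMk_prodMk hfmeas
          (Sum.inl ⟨(j, b), hbadj⟩) (Sum.inr ⟨(b, j), hbinv j b hbadj⟩)
          (Sum.inl ⟨(j, c), hcadj⟩) (Sum.inr ⟨(c, j), hbinv j c hcadj⟩)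
          (by simp [hbc]) (by simp) (by simp) (by simp [hbc])
        exact h0.comp (measurable_fst.mul measurable_snd) (measurable_fst.mul measurable_snd)
      have e : ∫ ω, (A j b ω * y0 b j ω) * (A j c ω * y0 c j ω)
          = (∫ ω, A j b ω * y0 b j ω) * ∫ ω, A j c ω * y0 c j ω :=
        i4.integral_mul_eq_mul_integral
          ((hAmeas j b hbadj).mul (hy0meas b j (hbinv j b hbadj))).aestronglyMeasurable
          ((hAmeas j c hcadj).mul (hy0meas c j (hbinv j c hcadj))).aestronglyMeasurable
      rw [e, hEW b hb, hEW c hc]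
      linear_combination (2 * p b - 1) * (2 * p c - 1) * hzsq j
    -- second moment of X j
    have hXsq : ∀ ω, (X j ω) ^ 2 = ∑ b ∈ (adj j).erase a, ∑ c ∈ (adj j).erase a,
        (A j b ω * y0 b j ω) * (A j c ω * y0 c j ω) := by
      intro ω
      have h1 : X j ω = A j a ω * ∑ b ∈ (adj j).erase a, A j b ω * y0 b j ω := by
        show (∑ b ∈ (adj j).erase a, A j a ω * A j b ω * y0 b j ω) = _
        rw [Finset.mul_sum]
        exact Finset.sum_congr rfl fun b _ => by ring
      rw [h1, mul_pow, sq (A j a ω), hAsq j a haJ ω, one_mul, sq, Finset.sum_mul_sum]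
    have hinner : ∀ b ∈ (adj j).erase a,
        ∑ c ∈ (adj j).erase a, ∫ ω, (A j b ω * y0 b j ω) * (A j c ω * y0 c j ω)
          = (2 * p b - 1) * (((r : ℝ) - 1) * m) - (2 * p b - 1) ^ 2 + 2 := by
      intro b hb
      rw [← Finset.add_sum_erase _ _ hb, hdiag b hb]
      have h1 : ∑ c ∈ ((adj j).erase a).erase b,
          ∫ ω, (A j b ω * y0 b j ω) * (A j c ω * y0 c j ω)
          = ∑ c ∈ ((adj j).erase a).erase b, (2 * p b - 1) * (2 * p c - 1) :=
        Finset.sum_congr rfl fun c hc => hcross b hb c (Finset.mem_of_mem_erase hc)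
          (Ne.symm (Finset.ne_of_mem_erase hc))
      rw [h1, ← Finset.mul_sum]
      have h2 : ∑ c ∈ ((adj j).erase a).erase b, (2 * p c - 1)
          = ((r : ℝ) - 1) * m - (2 * p b - 1) := by
        have h3 := Finset.add_sum_erase ((adj j).erase a) (fun c => 2 * p c - 1) hb
        beta_reduce at h3
        rw [hsm] at h3
        linarith
      rw [h2]
      ring
    have hEX2 : ∫ ω, (X j ω) ^ 2
        = (((r : ℝ) - 1) * m) ^ 2 - ((r : ℝ) - 1) * φ + 2 * ((r : ℝ) - 1) := by
      have h0 : ∫ ω, (X j ω) ^ 2 = ∑ b ∈ (adj j).erase a, ∑ c ∈ (adj j).erase a,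
          ∫ ω, (A j b ω * y0 b j ω) * (A j c ω * y0 c j ω) := by
        rw [show (fun ω => (X j ω) ^ 2) = fun ω => ∑ b ∈ (adj j).erase a,
            ∑ c ∈ (adj j).erase a, (A j b ω * y0 b j ω) * (A j c ω * y0 c j ω)
          from funext hXsq]
        rw [integral_finset_sum _ fun b hb =>
          integrable_finset_sum _ fun c hc => hint b hb c hc]
        exact Finset.sum_congr rfl fun b hb =>
          integral_finset_sum _ fun c hc => hint b hb c hc
      rw [h0, Finset.sum_congr rfl hinner, Finset.sum_add_distrib, Finset.sum_sub_distrib,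
        ← Finset.sum_mul, hsm, hsφ, Finset.sum_const, nsmul_eq_mul, hBcard]
      ring
    -- put everything together
    have hv := variance_eq_sub (hXL2 j hj)
    have hp1 : ℙ[X j ^ 2] = ∫ ω, (X j ω) ^ 2 := rfl
    have hp2 : ℙ[X j] = ∫ ω, X j ω := rfl
    rw [hv, hp1, hp2, hEX2, hEX]
    ring
  -- conclusion
  rw [hgoal, IndepFun.variance_sum hXL2 hXind, Finset.sum_congr rfl hvarX,
    Finset.sum_const, nsmul_eq_mul]
  have hcard : ((J.card : ℕ) : ℝ) = (s : ℝ) - 1 := by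
    rw [hJ, Finset.card_erase_of_mem hi, hinv a]
    have h1 : 1 ≤ s := by omega
    push_cast [Nat.cast_sub h1]
    ring
  rw [hcard]
  ring
end

section
/- For the i.i.d. meta-task iteration, the means satisfy the linear recursion E[ỹ^{(k)}_{a→i}] = (1/δ) · (2p_a - 1) · Σ_{j ∈ ∂⁻¹a^{(k)}\{i}} Σ_{b ∈ ∂j^{(k)}\{a}} (2p_b - 1) · E[ỹ^{(k-1)}_{b→j}], where δ = (s-1)(r-1). -/
open MeasureTheory ProbabilityTheory

lemma integral_pm_aux {Ω : Type*} [MeasureSpace Ω] [IsProbabilityMeasure (ℙ : Measure Ω)]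
    (f : Ω → ℝ) (c q : ℝ) (hf : Measurable f)
    (hval : ∀ ω, f ω = c ∨ f ω = -c) (hq : 0 ≤ q)
    (hdist : ℙ {ω | f ω = c} = ENNReal.ofReal q) :
    ∫ ω, f ω = c * (2 * q - 1) := by
  set S : Set Ω := f ⁻¹' {c} with hSdef
  have hSm : MeasurableSet S := hf (measurableSet_singleton c)
  have hSmeas : ℙ S = ENNReal.ofReal q := hdist
  have hle : ENNReal.ofReal q ≤ 1 := by rw [← hSmeas]; exact prob_le_one
  have hfe : f = fun ω => S.indicator (fun _ => c) ω + Sᶜ.indicator (fun _ => -c) ω := by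
    funext ω
    by_cases h : f ω = c
    · have hω : ω ∈ S := h
      simp [Set.indicator_of_mem hω, Set.indicator_of_notMem (Set.notMem_compl_iff.mpr hω), h]
    · have hω : ω ∉ S := h
      have : f ω = -c := (hval ω).resolve_left h
      simp [Set.indicator_of_notMem hω, Set.indicator_of_mem (Set.mem_compl hω), this]
  rw [hfe, integral_add ((integrable_const c).indicator hSm)
    ((integrable_const (-c)).indicator hSm.compl),
    integral_indicator_const _ hSm, integral_indicator_const _ hSm.compl]
  have hcompl : ℙ Sᶜ = 1 - ENNReal.ofReal q := by
    rw [measure_compl hSm (measure_ne_top _ _), hSmeas, measure_univ]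
  rw [measureReal_def, measureReal_def, hSmeas, hcompl, ENNReal.toReal_sub_of_le hle (by simp),
    ENNReal.toReal_ofReal hq]
  simp [smul_eq_mul]
  ring

/-- Recursion for the mean weights over a fresh (i.i.d.) meta-task: with
`δ = (s-1)(r-1)`, mutually independent answers `A^{(k)}` that are independent of the
previous weights `ỹ^{(k-1)}`, the updated weight
`ỹ^{(k)}_{a→i} = (1/δ) Σ_{j ∈ ∂⁻¹a^{(k)}\{i}} Σ_{b ∈ ∂j^{(k)}\{a}} A^{(k)}_{ja} A^{(k)}_{jb} ỹ^{(k-1)}_{b→j}`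
has mean
`E[ỹ^{(k)}_{a→i}] = (1/δ)(2p_a - 1) Σ_{j ∈ ∂⁻¹a^{(k)}\{i}} Σ_{b ∈ ∂j^{(k)}\{a}} (2p_b - 1)·E[ỹ^{(k-1)}_{b→j}]`. -/
theorem meta_task_mean_recursion
    {Ω U Q : Type*} [MeasureSpace Ω] [IsProbabilityMeasure (ℙ : Measure Ω)]
    [DecidableEq U] [DecidableEq Q]
    (adj : Q → Finset U) (inv : U → Finset Q)
    (hbip : ∀ (a : U) (j : Q), a ∈ adj j ↔ j ∈ inv a)
    (r s : ℕ) (hr : 2 ≤ r) (hs : 2 ≤ s)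
    (hadj : ∀ j : Q, (adj j).card = r) (hinv : ∀ a : U, (inv a).card = s)
    (z : Q → ℝ) (hz : ∀ j, z j = 1 ∨ z j = -1)
    (p : U → ℝ) (hp : ∀ b, p b ∈ Set.Icc (0 : ℝ) 1)
    (A : Q → U → Ω → ℝ) (yprev : U → Q → Ω → ℝ)
    (hAmeas : ∀ j b, b ∈ adj j → Measurable (A j b))
    (hymeas : ∀ b j, j ∈ inv b → Measurable (yprev b j))
    (hAval : ∀ j b, b ∈ adj j → ∀ ω, A j b ω = z j ∨ A j b ω = -z j)
    (hAdist : ∀ j b, b ∈ adj j → ℙ {ω | A j b ω = z j} = ENNReal.ofReal (p b))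
    (hyint : ∀ b j, j ∈ inv b → Integrable (yprev b j) ℙ)
    (hAindep : iIndepFun (m := fun _ => (inferInstance : MeasurableSpace ℝ))
      (fun e : {x : Q × U // x.2 ∈ adj x.1} => A e.1.1 e.1.2) ℙ)
    (hAyindep : IndepFun
      (fun ω (e : {x : Q × U // x.2 ∈ adj x.1}) => A e.1.1 e.1.2 ω)
      (fun ω (e : {x : U × Q // x.2 ∈ inv x.1}) => yprev e.1.1 e.1.2 ω) ℙ)
    (a : U) (i : Q) :
    (∫ ω, (1 / (((s : ℝ) - 1) * ((r : ℝ) - 1))) *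
        ∑ j ∈ (inv a).erase i, ∑ b ∈ (adj j).erase a,
          A j a ω * A j b ω * yprev b j ω)
      = (1 / (((s : ℝ) - 1) * ((r : ℝ) - 1))) * (2 * p a - 1) *
          ∑ j ∈ (inv a).erase i, ∑ b ∈ (adj j).erase a,
            (2 * p b - 1) * ∫ ω, yprev b j ω := by
  -- integrability of A's
  have hAbd : ∀ j c, c ∈ adj j → ∀ ω, ‖A j c ω‖ ≤ 1 := by
    intro j c hc ω
    rcases hAval j c hc ω with h | h <;> rcases hz j with hzj | hzj <;> simp [h, hzj]
  have intA : ∀ j c, c ∈ adj j → Integrable (A j c) ℙ := fun j c hc =>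
    (integrable_const (1 : ℝ)).mono' (hAmeas j c hc).aestronglyMeasurable
      (ae_of_all _ (hAbd j c hc))
  have intAA : ∀ j, ∀ c ∈ adj j, ∀ d ∈ adj j,
      Integrable (fun ω => A j c ω * A j d ω) ℙ := by
    intro j c hc d hd
    refine (integrable_const (1 : ℝ)).mono'
      (((hAmeas j c hc).mul (hAmeas j d hd)).aestronglyMeasurable)
      (ae_of_all _ fun ω => ?_)
    calc ‖A j c ω * A j d ω‖ = ‖A j c ω‖ * ‖A j d ω‖ := norm_mul _ _
      _ ≤ 1 * 1 := mul_le_mul (hAbd j c hc ω) (hAbd j d hd ω) (norm_nonneg _) zero_le_one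
      _ = 1 := one_mul 1
  -- mean of a single A
  have meanA : ∀ j c, c ∈ adj j → ∫ ω, A j c ω = z j * (2 * p c - 1) := by
    intro j c hc
    exact integral_pm_aux (A j c) (z j) (p c) (hAmeas j c hc) (hAval j c hc)
      (hp c).1 (hAdist j c hc)
  -- integrability of each summand
  have hint : ∀ j ∈ (inv a).erase i, ∀ b ∈ (adj j).erase a,
      Integrable (fun ω => A j a ω * A j b ω * yprev b j ω) ℙ := by
    intro j hj b hb
    have hja : a ∈ adj j := (hbip a j).mpr (Finset.mem_of_mem_erase hj)
    have hjb : b ∈ adj j := Finset.mem_of_mem_erase hb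
    have hjb' : j ∈ inv b := (hbip b j).mp hjb
    refine (hyint b j hjb').bdd_mul
      (((hAmeas j a hja).mul (hAmeas j b hjb)).aestronglyMeasurable) (c := 1) (ae_of_all _ fun ω => ?_)
    calc ‖A j a ω * A j b ω‖ = ‖A j a ω‖ * ‖A j b ω‖ := norm_mul _ _
      _ ≤ 1 * 1 := mul_le_mul (hAbd j a hja ω) (hAbd j b hjb ω) (norm_nonneg _) zero_le_one
      _ = 1 := one_mul 1
  -- per-term expectation
  have key : ∀ j ∈ (inv a).erase i, ∀ b ∈ (adj j).erase a,
      ∫ ω, A j a ω * A j b ω * yprev b j ω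
        = (2 * p a - 1) * ((2 * p b - 1) * ∫ ω, yprev b j ω) := by
    intro j hj b hb
    have hja : a ∈ adj j := (hbip a j).mpr (Finset.mem_of_mem_erase hj)
    have hjb : b ∈ adj j := Finset.mem_of_mem_erase hb
    have hba : b ≠ a := Finset.ne_of_mem_erase hb
    have hjb' : j ∈ inv b := (hbip b j).mp hjb
    set e1 : {x : Q × U // x.2 ∈ adj x.1} := ⟨(j, a), hja⟩ with he1
    set e2 : {x : Q × U // x.2 ∈ adj x.1} := ⟨(j, b), hjb⟩ with he2
    have hne : e1 ≠ e2 := fun h => hba (congrArg (fun e => e.1.2) h).symm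
    have indep1 : IndepFun (A j a) (A j b) ℙ := hAindep.indepFun hne
    have indep2 : IndepFun (fun ω => A j a ω * A j b ω) (yprev b j) ℙ := by
      have := hAyindep.comp
        (φ := fun v : {x : Q × U // x.2 ∈ adj x.1} → ℝ => v e1 * v e2)
        (ψ := fun w : {x : U × Q // x.2 ∈ inv x.1} → ℝ => w ⟨(b, j), hjb'⟩)
        ((measurable_pi_apply (X := fun _ : {x : Q × U // x.2 ∈ adj x.1} => ℝ) e1).mul
          (measurable_pi_apply (X := fun _ : {x : Q × U // x.2 ∈ adj x.1} => ℝ) e2))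
        (measurable_pi_apply (X := fun _ : {x : U × Q // x.2 ∈ inv x.1} => ℝ) _)
      exact this
    have h1 : ∫ ω, A j a ω * A j b ω * yprev b j ω
        = (∫ ω, A j a ω * A j b ω) * ∫ ω, yprev b j ω :=
      indep2.integral_fun_mul_eq_mul_integral (intAA j a hja b hjb).aestronglyMeasurable
        (hyint b j hjb').aestronglyMeasurable
    have h2 : (∫ ω, A j a ω * A j b ω) = (∫ ω, A j a ω) * ∫ ω, A j b ω :=
      indep1.integral_fun_mul_eq_mul_integral (intA j a hja).aestronglyMeasurable
        (intA j b hjb).aestronglyMeasurable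
    rw [h1, h2, meanA j a hja, meanA j b hjb]
    rcases hz j with hzj | hzj <;> rw [hzj] <;> ring
  rw [integral_const_mul]
  have hswap : (∫ ω, ∑ j ∈ (inv a).erase i, ∑ b ∈ (adj j).erase a,
      A j a ω * A j b ω * yprev b j ω)
      = ∑ j ∈ (inv a).erase i, ∑ b ∈ (adj j).erase a,
        ∫ ω, A j a ω * A j b ω * yprev b j ω := by
    rw [integral_finset_sum ((inv a).erase i)
      (f := fun j ω => ∑ b ∈ (adj j).erase a, A j a ω * A j b ω * yprev b j ω)
      (fun j hj => integrable_finset_sum ((adj j).erase a) (fun b hb => hint j hj b hb))]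
    exact Finset.sum_congr rfl fun j hj =>
      integral_finset_sum ((adj j).erase a)
        (f := fun b ω => A j a ω * A j b ω * yprev b j ω)
        (fun b hb => hint j hj b hb)
  have hsum : (∑ j ∈ (inv a).erase i, ∑ b ∈ (adj j).erase a,
      ∫ ω, A j a ω * A j b ω * yprev b j ω)
      = (2 * p a - 1) * ∑ j ∈ (inv a).erase i, ∑ b ∈ (adj j).erase a,
        (2 * p b - 1) * ∫ ω, yprev b j ω := by
    rw [Finset.mul_sum]
    refine Finset.sum_congr rfl fun j hj => ?_
    rw [Finset.mul_sum]
    exact Finset.sum_congr rfl fun b hb => key j hj b hb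
  rw [hswap, hsum, mul_assoc]
end

section
/- For the i.i.d. meta-task iteration with mutually independent previous-step weights, the variances satisfy the exact recursion Var(ỹ^{(k)}_{a→i}) = (1/δ²) Σ_{j ∈ ∂⁻¹a^{(k)}\{i}} [ Σ_{b ∈ ∂j^{(k)}\{a}} ( Var(ỹ^{(k-1)}_{b→j}) + (1 - (2p_b - 1)²)·(E[ỹ^{(k-1)}_{b→j}])² ) + (1 - (2p_a - 1)²)·( Σ_{b ∈ ∂j^{(k)}\{a}} (2p_b - 1)·E[ỹ^{(k-1)}_{b→j}] )² ], where δ = (s-1)(r-1). -/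
open MeasureTheory ProbabilityTheory

/-- Exact variance recursion for the i.i.d. meta-task iteration: with
`δ = (s-1)(r-1)` and the answers together with the square-integrable previous
weights mutually independent, the updated weight
`ỹ^{(k)}_{a→i} = (1/δ) Σ_{j ∈ ∂⁻¹a^{(k)}\{i}} Σ_{b ∈ ∂j^{(k)}\{a}} A^{(k)}_{ja} A^{(k)}_{jb} ỹ^{(k-1)}_{b→j}`
satisfies
`Var(ỹ^{(k)}_{a→i}) = (1/δ²) Σ_{j} [ Σ_{b} (Var(ỹ^{(k-1)}_{b→j}) + (1-(2p_b-1)²)(E[ỹ^{(k-1)}_{b→j}])²)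
  + (1-(2p_a-1)²)·(Σ_{b} (2p_b-1)·E[ỹ^{(k-1)}_{b→j}])² ]`. -/
theorem meta_task_variance_recursion
    {Ω U Q : Type*} [MeasureSpace Ω] [IsProbabilityMeasure (ℙ : Measure Ω)]
    [DecidableEq U] [DecidableEq Q]
    (adj : Q → Finset U) (inv : U → Finset Q)
    (hbip : ∀ (a : U) (j : Q), a ∈ adj j ↔ j ∈ inv a)
    (r s : ℕ) (hr : 2 ≤ r) (hs : 2 ≤ s)
    (hadj : ∀ j : Q, (adj j).card = r) (hinv : ∀ a : U, (inv a).card = s)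
    (z : Q → ℝ) (hz : ∀ j, z j = 1 ∨ z j = -1)
    (p : U → ℝ) (hp : ∀ b, p b ∈ Set.Icc (0 : ℝ) 1)
    (A : Q → U → Ω → ℝ) (yprev : U → Q → Ω → ℝ)
    (hAmeas : ∀ j b, b ∈ adj j → Measurable (A j b))
    (hymeas : ∀ b j, j ∈ inv b → Measurable (yprev b j))
    (hAval : ∀ j b, b ∈ adj j → ∀ ω, A j b ω = z j ∨ A j b ω = -z j)
    (hAdist : ∀ j b, b ∈ adj j → ℙ {ω | A j b ω = z j} = ENNReal.ofReal (p b))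
    (hysq : ∀ b j, j ∈ inv b → MemLp (yprev b j) 2 ℙ)
    (hindep : iIndepFun
      (Sum.elim (fun e : {x : Q × U // x.2 ∈ adj x.1} => A e.1.1 e.1.2)
                (fun e : {x : U × Q // x.2 ∈ inv x.1} => yprev e.1.1 e.1.2)) ℙ)
    (a : U) (i : Q) :
    variance (fun ω => (1 / (((s : ℝ) - 1) * ((r : ℝ) - 1))) *
        ∑ j ∈ (inv a).erase i, ∑ b ∈ (adj j).erase a,
          A j a ω * A j b ω * yprev b j ω) ℙ
      = (1 / (((s : ℝ) - 1) * ((r : ℝ) - 1)) ^ 2) *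
          ∑ j ∈ (inv a).erase i,
            ((∑ b ∈ (adj j).erase a,
                (variance (yprev b j) ℙ
                  + (1 - (2 * p b - 1) ^ 2) * (∫ ω, yprev b j ω) ^ 2))
              + (1 - (2 * p a - 1) ^ 2) *
                  (∑ b ∈ (adj j).erase a, (2 * p b - 1) * ∫ ω, yprev b j ω) ^ 2) := by
  classical
  set f := (Sum.elim (fun e : {x : Q × U // x.2 ∈ adj x.1} => A e.1.1 e.1.2)
                (fun e : {x : U × Q // x.2 ∈ inv x.1} => yprev e.1.1 e.1.2)) with hfdef
  have hfmeas : ∀ idx, Measurable (f idx) := by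
    rintro (⟨⟨j, b⟩, hb⟩ | ⟨⟨b, j⟩, hj⟩)
    · exact hAmeas j b hb
    · exact hymeas b j hj
  -- basic facts about the answers A
  have hz2 : ∀ j, z j ^ 2 = 1 := by
    intro j; rcases hz j with h | h <;> rw [h] <;> norm_num
  have hAsq : ∀ j b, b ∈ adj j → ∀ ω, A j b ω ^ 2 = 1 := by
    intro j b hb ω
    rcases hz j with h | h <;> rcases hAval j b hb ω with h2 | h2 <;>
      simp [h2, h] <;> norm_num
  have hAabs : ∀ j b, b ∈ adj j → ∀ ω, ‖A j b ω‖ = 1 := by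
    intro j b hb ω
    rcases hz j with h | h <;> rcases hAval j b hb ω with h2 | h2 <;>
      simp [h2, h]
  have hAint : ∀ j b, b ∈ adj j → ∫ ω, A j b ω = z j * (2 * p b - 1) := by
    intro j b hb
    set E : Set Ω := A j b ⁻¹' {z j} with hE
    have hEmeas : MeasurableSet E := hAmeas j b hb (measurableSet_singleton _)
    have hEP : ℙ E = ENNReal.ofReal (p b) := by
      rw [← hAdist j b hb]; rfl
    have heq : ∀ ω, A j b ω = z j * (2 * E.indicator (1 : Ω → ℝ) ω - 1) := by
      intro ω
      by_cases hω : ω ∈ E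
      · have : A j b ω = z j := hω
        rw [this, Set.indicator_of_mem hω]; simp only [Pi.one_apply]; ring
      · have hne : A j b ω ≠ z j := hω
        have : A j b ω = -z j := (hAval j b hb ω).resolve_left hne
        rw [this, Set.indicator_of_notMem hω]; ring
    have hind_int : Integrable (E.indicator (1 : Ω → ℝ)) ℙ :=
      (integrable_const (1 : ℝ)).indicator hEmeas
    calc ∫ ω, A j b ω
        = ∫ ω, z j * (2 * E.indicator (1 : Ω → ℝ) ω - 1) := by
          exact integral_congr_ae (Filter.Eventually.of_forall heq)
      _ = z j * ∫ ω, (2 * E.indicator (1 : Ω → ℝ) ω - 1) := integral_const_mul _ _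
      _ = z j * (2 * (∫ ω, E.indicator (1 : Ω → ℝ) ω) - ∫ _ω : Ω, (1 : ℝ)) := by
          rw [integral_sub (hind_int.const_mul 2) (integrable_const 1),
            integral_const_mul]
      _ = z j * (2 * p b - 1) := by
          have h1 : ∫ ω, E.indicator (1 : Ω → ℝ) ω = p b := by
            rw [integral_indicator_one hEmeas, measureReal_def, hEP, ENNReal.toReal_ofReal (hp b).1]
          simp only [h1, integral_const, probReal_univ, measure_univ, ENNReal.toReal_one, smul_eq_mul,
            one_mul, mul_one]
  have hAmem : ∀ j b, b ∈ adj j → MemLp (A j b) ⊤ ℙ := fun j b hb =>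
    memLp_top_of_bound (hAmeas j b hb).aestronglyMeasurable 1
      (Filter.Eventually.of_forall fun ω => le_of_eq (hAabs j b hb ω))
  -- memberships derived from the bipartite structure
  have hmem_adj : ∀ j ∈ (inv a).erase i, a ∈ adj j := fun j hj =>
    (hbip a j).mpr (Finset.mem_of_mem_erase hj)
  -- per-edge facts (for j ∈ (inv a).erase i, b ∈ (adj j).erase a)
  have hXmem : ∀ (j : Q) (b : U), b ∈ adj j →
      MemLp (fun ω => A j b ω * yprev b j ω) 2 ℙ := by
    intro j b hb
    have hjb : j ∈ inv b := (hbip b j).mp hb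
    refine MemLp.of_le (hysq b j hjb)
      (((hAmeas j b hb).mul (hymeas b j hjb)).aestronglyMeasurable) ?_
    refine Filter.Eventually.of_forall fun ω => ?_
    rw [norm_mul, hAabs j b hb, one_mul]
  have hXint : ∀ (j : Q) (b : U), b ∈ adj j →
      ∫ ω, A j b ω * yprev b j ω = z j * (2 * p b - 1) * ∫ ω, yprev b j ω := by
    intro j b hb
    have hjb : j ∈ inv b := (hbip b j).mp hb
    have hii : IndepFun (A j b) (yprev b j) ℙ := by
      have := hindep.indepFun (i := Sum.inl ⟨(j, b), hb⟩) (j := Sum.inr ⟨(b, j), hjb⟩)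
        (by simp)
      exact this
    rw [hii.integral_fun_mul_eq_mul_integral (hAmeas j b hb).aestronglyMeasurable
      (hymeas b j hjb).aestronglyMeasurable, hAint j b hb]
  have hXvar : ∀ (j : Q) (b : U), b ∈ adj j →
      variance (fun ω => A j b ω * yprev b j ω) ℙ
        = variance (yprev b j) ℙ
          + (1 - (2 * p b - 1) ^ 2) * (∫ ω, yprev b j ω) ^ 2 := by
    intro j b hb
    have hjb : j ∈ inv b := (hbip b j).mp hb
    have h1 : ((fun ω => A j b ω * yprev b j ω) ^ 2) = ((yprev b j) ^ 2) := by
      funext ω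
      simp only [Pi.pow_apply, mul_pow, hAsq j b hb ω, one_mul]
    have h2 := variance_eq_sub (μ := ℙ) (hXmem j b hb)
    have h3 := variance_eq_sub (μ := ℙ) (hysq b j hjb)
    rw [h2, h1, hXint j b hb]
    have h4 : (∫ ω, (yprev b j ^ 2) ω ∂ℙ) = variance (yprev b j) ℙ + (∫ ω, yprev b j ω) ^ 2 := by
      rw [h3]; ring
    rw [h4]
    linear_combination (-(2 * p b - 1) ^ 2 * (∫ ω, yprev b j ω) ^ 2) * hz2 j
  -- L² membership of the inner sums
  have hTmem : ∀ j : Q, MemLp (fun ω => ∑ b ∈ (adj j).erase a, A j b ω * yprev b j ω) 2 ℙ := by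
    intro j
    exact memLp_finset_sum _ fun b hb => hXmem j b (Finset.mem_of_mem_erase hb)
  have hSmeas : ∀ j ∈ (inv a).erase i,
      Measurable (fun ω => ∑ b ∈ (adj j).erase a, A j a ω * A j b ω * yprev b j ω) := by
    intro j hj
    refine Finset.measurable_sum _ fun b hb => ?_
    have hb' := Finset.mem_of_mem_erase hb
    exact ((hAmeas j a (hmem_adj j hj)).mul (hAmeas j b hb')).mul
      (hymeas b j ((hbip b j).mp hb'))
  have hSTeq : ∀ j ∈ (inv a).erase i, ∀ ω,
      (∑ b ∈ (adj j).erase a, A j a ω * A j b ω * yprev b j ω)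
        = A j a ω * ∑ b ∈ (adj j).erase a, A j b ω * yprev b j ω := by
    intro j hj ω
    rw [Finset.mul_sum]
    exact Finset.sum_congr rfl fun b _ => by ring
  have hSmem : ∀ j ∈ (inv a).erase i,
      MemLp (fun ω => ∑ b ∈ (adj j).erase a, A j a ω * A j b ω * yprev b j ω) 2 ℙ := by
    intro j hj
    refine MemLp.of_le (hTmem j) (hSmeas j hj).aestronglyMeasurable ?_
    refine Filter.Eventually.of_forall fun ω => ?_
    rw [hSTeq j hj ω, norm_mul, hAabs j a (hmem_adj j hj), one_mul]
  -- integral of the inner sum S_j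
  have hSint : ∀ j ∈ (inv a).erase i,
      ∫ ω, (∑ b ∈ (adj j).erase a, A j a ω * A j b ω * yprev b j ω)
        = (2 * p a - 1) * ∑ b ∈ (adj j).erase a, (2 * p b - 1) * ∫ ω, yprev b j ω := by
    intro j hj
    have hja := hmem_adj j hj
    have hint : ∀ b ∈ (adj j).erase a,
        Integrable (fun ω => A j a ω * A j b ω * yprev b j ω) ℙ := by
      intro b hb
      have hb' := Finset.mem_of_mem_erase hb
      have hmm : MemLp (fun ω => A j a ω * A j b ω * yprev b j ω) 2 ℙ := by
        refine MemLp.of_le (hXmem j b hb')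
          ((((hAmeas j a hja).mul (hAmeas j b hb')).mul
            (hymeas b j ((hbip b j).mp hb'))).aestronglyMeasurable) ?_
        refine Filter.Eventually.of_forall fun ω => ?_
        rw [mul_assoc, norm_mul, hAabs j a hja, one_mul]
      exact hmm.integrable one_le_two
    have hterm : ∀ b ∈ (adj j).erase a,
        ∫ ω, A j a ω * A j b ω * yprev b j ω
          = (z j * (2 * p a - 1)) * ((z j * (2 * p b - 1)) * ∫ ω, yprev b j ω) := by
      intro b hb
      have hb' := Finset.mem_of_mem_erase hb
      have hjb : j ∈ inv b := (hbip b j).mp hb'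
      have hne : b ≠ a := Finset.ne_of_mem_erase hb
      have hPair : IndepFun (f (Sum.inl ⟨(j, a), hja⟩) * f (Sum.inl ⟨(j, b), hb'⟩))
          (f (Sum.inr ⟨(b, j), hjb⟩)) ℙ :=
        hindep.indepFun_mul_left hfmeas _ _ _ (by simp) (by simp)
      have hAB : IndepFun (f (Sum.inl ⟨(j, a), hja⟩)) (f (Sum.inl ⟨(j, b), hb'⟩)) ℙ := by
        refine hindep.indepFun ?_
        simp only [ne_eq, Sum.inl.injEq, Subtype.mk.injEq, Prod.mk.injEq, not_and]
        intro _; exact fun h => hne h.symm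
      have e1 : ∫ ω, A j a ω * A j b ω * yprev b j ω
          = (∫ ω, A j a ω * A j b ω) * ∫ ω, yprev b j ω := by
        exact hPair.integral_fun_mul_eq_mul_integral ((hfmeas _).mul (hfmeas _)).aestronglyMeasurable
          (hfmeas (Sum.inr ⟨(b, j), hjb⟩)).aestronglyMeasurable
      have e2 : ∫ ω, A j a ω * A j b ω = (∫ ω, A j a ω) * ∫ ω, A j b ω :=
        hAB.integral_fun_mul_eq_mul_integral (hfmeas _).aestronglyMeasurable (hfmeas _).aestronglyMeasurable
      rw [e1, e2, hAint j a hja, hAint j b hb']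
      ring
    rw [integral_finset_sum _ hint, Finset.sum_congr rfl hterm, Finset.mul_sum]
    refine Finset.sum_congr rfl fun b hb => ?_
    linear_combination ((2 * p a - 1) * ((2 * p b - 1) * ∫ ω, yprev b j ω)) * hz2 j
  -- variance of the T_j sums
  have hTvar : ∀ j : Q,
      variance (fun ω => ∑ b ∈ (adj j).erase a, A j b ω * yprev b j ω) ℙ
        = ∑ b ∈ (adj j).erase a,
            (variance (yprev b j) ℙ
              + (1 - (2 * p b - 1) ^ 2) * (∫ ω, yprev b j ω) ^ 2) := by
    intro j
    have hpair : Set.Pairwise ((adj j).erase a : Set U)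
        (fun b b' => IndepFun (fun ω => A j b ω * yprev b j ω)
          (fun ω => A j b' ω * yprev b' j ω) ℙ) := by
      intro b hb b' hb' hbb'
      have hbm := Finset.mem_of_mem_erase (Finset.mem_coe.mp hb)
      have hbm' := Finset.mem_of_mem_erase (Finset.mem_coe.mp hb')
      have hres := hindep.indepFun_mul_mul hfmeas
        (Sum.inl ⟨(j, b), hbm⟩) (Sum.inr ⟨(b, j), (hbip b j).mp hbm⟩)
        (Sum.inl ⟨(j, b'), hbm'⟩) (Sum.inr ⟨(b', j), (hbip b' j).mp hbm'⟩)
        (by simp [hbb']) (by simp) (by simp)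
        (by simp only [ne_eq, Sum.inr.injEq, Subtype.mk.injEq, Prod.mk.injEq, not_and];
            exact fun h => absurd h hbb')
      exact hres
    have hvs := IndepFun.variance_sum (μ := ℙ)
      (X := fun b ω => A j b ω * yprev b j ω) (s := (adj j).erase a)
      (fun b hb => hXmem j b (Finset.mem_of_mem_erase hb)) hpair
    have hfx : (∑ b ∈ (adj j).erase a, fun ω => A j b ω * yprev b j ω)
        = fun ω => ∑ b ∈ (adj j).erase a, A j b ω * yprev b j ω := by
      funext ω; rw [Finset.sum_apply]
    rw [hfx] at hvs
    rw [hvs]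
    exact Finset.sum_congr rfl fun b hb => hXvar j b (Finset.mem_of_mem_erase hb)
  -- variance of each S_j
  have hSvar : ∀ j ∈ (inv a).erase i,
      variance (fun ω => ∑ b ∈ (adj j).erase a, A j a ω * A j b ω * yprev b j ω) ℙ
        = (∑ b ∈ (adj j).erase a,
            (variance (yprev b j) ℙ
              + (1 - (2 * p b - 1) ^ 2) * (∫ ω, yprev b j ω) ^ 2))
          + (1 - (2 * p a - 1) ^ 2) *
              (∑ b ∈ (adj j).erase a, (2 * p b - 1) * ∫ ω, yprev b j ω) ^ 2 := by
    intro j hj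
    have hja := hmem_adj j hj
    have hd2 := variance_eq_sub (μ := ℙ) (hSmem j hj)
    have hd3 := variance_eq_sub (μ := ℙ) (hTmem j)
    have hsq : ((fun ω => ∑ b ∈ (adj j).erase a, A j a ω * A j b ω * yprev b j ω) ^ 2)
        = ((fun ω => ∑ b ∈ (adj j).erase a, A j b ω * yprev b j ω) ^ 2) := by
      funext ω
      simp only [Pi.pow_apply]
      rw [hSTeq j hj ω, mul_pow, hAsq j a hja ω, one_mul]
    have hTint : ∫ ω, (∑ b ∈ (adj j).erase a, A j b ω * yprev b j ω)
        = z j * ∑ b ∈ (adj j).erase a, (2 * p b - 1) * ∫ ω, yprev b j ω := by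
      rw [integral_finset_sum _ fun b hb =>
        (hXmem j b (Finset.mem_of_mem_erase hb)).integrable one_le_two, Finset.mul_sum]
      refine Finset.sum_congr rfl fun b hb => ?_
      rw [hXint j b (Finset.mem_of_mem_erase hb)]; ring
    rw [hd2, hsq, hSint j hj]
    have hT2 : (∫ ω, ((fun ω => ∑ b ∈ (adj j).erase a, A j b ω * yprev b j ω) ^ 2) ω)
        = (∑ b ∈ (adj j).erase a,
            (variance (yprev b j) ℙ
              + (1 - (2 * p b - 1) ^ 2) * (∫ ω, yprev b j ω) ^ 2))
          + (z j * ∑ b ∈ (adj j).erase a, (2 * p b - 1) * ∫ ω, yprev b j ω) ^ 2 := by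
      have hd3' := hd3
      rw [hTvar j, hTint] at hd3'
      linarith [hd3']
    rw [hT2]
    linear_combination
      ((∑ b ∈ (adj j).erase a, (2 * p b - 1) * ∫ ω, yprev b j ω) ^ 2) * hz2 j
  -- index finsets attached to each question
  set F : Q → Finset ({x : Q × U // x.2 ∈ adj x.1} ⊕ {x : U × Q // x.2 ∈ inv x.1}) :=
    fun j => ((adj j).attach.image fun b => Sum.inl ⟨(j, b.1), b.2⟩)
      ∪ ((adj j).attach.image fun b => Sum.inr ⟨(b.1, j), (hbip b.1 j).mp b.2⟩) with hF
  have hFdisj : ∀ j j', j ≠ j' → Disjoint (F j) (F j') := by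
    intro j j' hne
    rw [Finset.disjoint_left]
    rintro x hx hx'
    simp only [hF, Finset.mem_union, Finset.mem_image, Finset.mem_attach, true_and] at hx hx'
    rcases hx with ⟨b, hb⟩ | ⟨b, hb⟩ <;> rcases hx' with ⟨b', hb'⟩ | ⟨b', hb'⟩ <;>
        rw [← hb] at hb' <;>
        simp only [Sum.inl.injEq, Sum.inr.injEq, Subtype.mk.injEq, Prod.mk.injEq,
          reduceCtorEq] at hb' <;>
        first
          | exact hne hb'.1.symm
          | exact hne hb'.2.symm
          | exact hb'
  have hmemF1 : ∀ (j : Q) (b : U) (hb : b ∈ adj j),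
      (Sum.inl ⟨(j, b), hb⟩ :
        {x : Q × U // x.2 ∈ adj x.1} ⊕ {x : U × Q // x.2 ∈ inv x.1}) ∈ F j := by
    intro j b hb
    exact Finset.mem_union_left _ (Finset.mem_image.mpr ⟨⟨b, hb⟩, Finset.mem_attach _ _, rfl⟩)
  have hmemF2 : ∀ (j : Q) (b : U) (hb : b ∈ adj j) (hjb : j ∈ inv b),
      (Sum.inr ⟨(b, j), hjb⟩ :
        {x : Q × U // x.2 ∈ adj x.1} ⊕ {x : U × Q // x.2 ∈ inv x.1}) ∈ F j := by
    intro j b hb hjb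
    exact Finset.mem_union_right _ (Finset.mem_image.mpr ⟨⟨b, hb⟩, Finset.mem_attach _ _, rfl⟩)
  -- independence of the S_j across different questions
  have hSindep : ∀ j ∈ (inv a).erase i, ∀ j' ∈ (inv a).erase i, j ≠ j' →
      IndepFun (fun ω => ∑ b ∈ (adj j).erase a, A j a ω * A j b ω * yprev b j ω)
               (fun ω => ∑ b ∈ (adj j').erase a, A j' a ω * A j' b ω * yprev b j' ω) ℙ := by
    intro j hj j' hj' hne
    have base := hindep.indepFun_finset (F j) (F j') (hFdisj j j' hne) hfmeas
    have key : ∀ jj ∈ (inv a).erase i, ∃ G : ({x // x ∈ F jj} → ℝ) → ℝ,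
        Measurable G ∧ (G ∘ fun ω (x : {x // x ∈ F jj}) => f x.1 ω)
          = fun ω => ∑ b ∈ (adj jj).erase a, A jj a ω * A jj b ω * yprev b jj ω := by
      intro jj hjj
      have hja : a ∈ adj jj := hmem_adj jj hjj
      refine ⟨fun v => ∑ b ∈ ((adj jj).erase a).attach,
        v ⟨Sum.inl ⟨(jj, a), hja⟩, hmemF1 jj a hja⟩ *
        v ⟨Sum.inl ⟨(jj, b.1), Finset.mem_of_mem_erase b.2⟩,
            hmemF1 jj b.1 (Finset.mem_of_mem_erase b.2)⟩ *
        v ⟨Sum.inr ⟨(b.1, jj), (hbip b.1 jj).mp (Finset.mem_of_mem_erase b.2)⟩,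
            hmemF2 jj b.1 (Finset.mem_of_mem_erase b.2)
              ((hbip b.1 jj).mp (Finset.mem_of_mem_erase b.2))⟩, ?_, ?_⟩
      · refine Finset.measurable_sum _ fun b _ => ?_
        fun_prop
      · funext ω
        simp only [Function.comp_apply]
        rw [← Finset.sum_attach ((adj jj).erase a)
          (fun b => A jj a ω * A jj b ω * yprev b jj ω)]
        rfl
    obtain ⟨G, hGmeas, hGeq⟩ := key j hj
    obtain ⟨G', hGmeas', hGeq'⟩ := key j' hj'
    have hcomp := base.comp hGmeas hGmeas'
    rwa [hGeq, hGeq'] at hcomp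
  -- assembly
  have hsum_eq : (fun ω => ∑ j ∈ (inv a).erase i,
        ∑ b ∈ (adj j).erase a, A j a ω * A j b ω * yprev b j ω)
      = ∑ j ∈ (inv a).erase i,
          (fun ω => ∑ b ∈ (adj j).erase a, A j a ω * A j b ω * yprev b j ω) := by
    funext ω; rw [Finset.sum_apply]
  rw [variance_const_mul, hsum_eq,
    IndepFun.variance_sum (μ := ℙ) (fun j hj => hSmem j hj)
      (fun j hj j' hj' hne => hSindep j (Finset.mem_coe.mp hj) j' (Finset.mem_coe.mp hj') hne),
    Finset.sum_congr rfl (fun j hj => hSvar j hj), div_pow, one_pow]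
end
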